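/- arXiv:2007.05998 — 7 statements merged into one kernel-verified Lean document; each statement's English description precedes it below -/
import Mathlib

section
/- Let \langle \cdot, \cdot \rangle be a bilinear pairing on polynomials satisfying \langle x f(x), g(y) \rangle + \langle f(x), y g(y) \rangle = (\int f d\mu_1)(\int g d\mu_2) for the Cauchy kernel pairing (rank-one shift condition), and let P_n, Q_n be the associated monic bi-orthogonal polynomials with \langle P_n, Q_m \rangle = h_n \delta_{n,m}, h_n \neq 0. Define a_n = -\int P_{n+1} d\mu_1 / \int P_n d\mu_1 (assuming the denominator is nonzero). Then for all m < n, \langle x(P_{n+1}(x) + a_n P_n(x)), Q_m(y) \rangle = -\langle P_{n+1}(x) + a_n P_n(x), y Q_m(y) \rangle, and this quantity vanishes whenever \deg(y Q_m) < n. -/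
open Polynomial

/-- For a bilinear Cauchy pairing satisfying the rank-one shift condition
`⟨xf, g⟩ + ⟨f, yg⟩ = (∫f dμ₁)(∫g dμ₂)`, with `a_n` chosen to kill the rank-one term,
`⟨x(P_{n+1}+a_nP_n), Q_m⟩ = -⟨P_{n+1}+a_nP_n, yQ_m⟩`, which vanishes when `deg(yQ_m) < n`. -/
theorem stmt7 (B : Polynomial ℝ →ₗ[ℝ] Polynomial ℝ →ₗ[ℝ] ℝ)
    (L1 L2 : Polynomial ℝ →ₗ[ℝ] ℝ)
    (hshift : ∀ f g : Polynomial ℝ,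
      B (Polynomial.X * f) g + B f (Polynomial.X * g) = L1 f * L2 g)
    (P Q : ℕ → Polynomial ℝ) (h : ℕ → ℝ)
    (hPmonic : ∀ n, (P n).Monic) (hPdeg : ∀ n, (P n).natDegree = n)
    (hQmonic : ∀ n, (Q n).Monic) (hQdeg : ∀ n, (Q n).natDegree = n)
    (horth : ∀ n m, B (P n) (Q m) = if n = m then h n else 0) (hh : ∀ n, h n ≠ 0)
    (n : ℕ) (a : ℝ) (hL : L1 (P n) ≠ 0) (ha : a = - L1 (P (n+1)) / L1 (P n)) :
    ∀ m < n,
      (B (Polynomial.X * (P (n+1) + Polynomial.C a * P n)) (Q m) =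
        - B (P (n+1) + Polynomial.C a * P n) (Polynomial.X * Q m)) ∧
      ((Polynomial.X * Q m).natDegree < n →
        B (Polynomial.X * (P (n+1) + Polynomial.C a * P n)) (Q m) = 0) := by

  have key : ∀ d k (g : Polynomial ℝ), g.natDegree ≤ d → d < k → B (P k) g = 0 := by
    intro d
    induction d with
    | zero =>
      intro k g hg hk
      have hQ0 : Q 0 = 1 := (hQmonic 0).natDegree_eq_zero.mp (hQdeg 0)
      have hgc : g = Polynomial.C (g.coeff 0) := Polynomial.eq_C_of_natDegree_le_zero hg
      have hsm : g = g.coeff 0 • Q 0 := by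
        rw [hQ0, smul_eq_C_mul, mul_one]; exact hgc
      rw [hsm, map_smul, smul_eq_mul, horth k 0, if_neg (by omega)]
      ring
    | succ d ih =>
      intro k g hg hk
      by_cases hd : g.natDegree ≤ d
      · exact ih k g hd (Nat.lt_of_succ_lt hk)
      · push_neg at hd
        have hdeg : g.natDegree = d + 1 := le_antisymm hg hd
        have hgne : g ≠ 0 := by
          intro h0; rw [h0, Polynomial.natDegree_zero] at hdeg; omega
        set c := g.leadingCoeff with hc
        have hcne : c ≠ 0 := Polynomial.leadingCoeff_ne_zero.mpr hgne
        have hqd : (Polynomial.C c * Q (d+1)).natDegree = d + 1 := by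
          rw [Polynomial.natDegree_C_mul hcne, hQdeg]
        have hqne : Polynomial.C c * Q (d+1) ≠ 0 :=
          mul_ne_zero (Polynomial.C_ne_zero.mpr hcne) (hQmonic (d+1)).ne_zero
        have hdegeq : g.degree = (Polynomial.C c * Q (d+1)).degree := by
          rw [Polynomial.degree_eq_natDegree hgne, Polynomial.degree_eq_natDegree hqne,
            hdeg, hqd]
        have hlceq : g.leadingCoeff = (Polynomial.C c * Q (d+1)).leadingCoeff := by
          rw [Polynomial.leadingCoeff_mul, Polynomial.leadingCoeff_C,
            (hQmonic (d+1)).leadingCoeff, mul_one]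
        have hlt : (g - Polynomial.C c * Q (d+1)).degree < g.degree :=
          Polynomial.degree_sub_lt hdegeq hgne hlceq
        have hnd : (g - Polynomial.C c * Q (d+1)).natDegree ≤ d := by
          by_cases hz : g - Polynomial.C c * Q (d+1) = 0
          · simp [hz]
          · have := (Polynomial.natDegree_lt_iff_degree_lt hz).mpr
              (lt_of_lt_of_le hlt (by rw [Polynomial.degree_eq_natDegree hgne, hdeg]))
            omega
        have hsplit : g = (g - Polynomial.C c * Q (d+1)) + Polynomial.C c * Q (d+1) := by ring
        rw [hsplit, map_add, ih k _ hnd (Nat.lt_of_succ_lt hk)]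
        rw [show Polynomial.C c * Q (d+1) = c • Q (d+1) from (smul_eq_C_mul c).symm,
          map_smul, smul_eq_mul, horth k (d+1), if_neg (by omega)]
        ring
  intro m hm
  set f := P (n+1) + Polynomial.C a * P n with hf
  have hL1f : L1 f = 0 := by
    rw [hf, map_add, show Polynomial.C a * P n = a • P n from (smul_eq_C_mul a).symm,
      map_smul, smul_eq_mul, ha, div_mul_cancel₀ _ hL]
    ring
  have hsh := hshift f (Q m)
  rw [hL1f, zero_mul] at hsh
  have h1 : B (Polynomial.X * f) (Q m) = - B f (Polynomial.X * Q m) := by linarith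
  refine ⟨h1, fun hdeg => ?_⟩
  have h2 : B f (Polynomial.X * Q m) = 0 := by
    rw [hf, map_add, LinearMap.add_apply, key n (n+1) _ (le_of_lt hdeg) (Nat.lt_succ_self n),
      show Polynomial.C a * P n = a • P n from (smul_eq_C_mul a).symm, map_smul,
      LinearMap.smul_apply, smul_eq_mul]
    rw [key _ n _ le_rfl hdeg]; ring
  rw [h1, h2, neg_zero]
end

section
/- Let \theta_1 = 1/k_1, \theta_2 = 1/k_2 with k_1, k_2 positive integers, and let P_n(x^{\theta_1}), Q_n(y^{\theta_2}) be the monic two-parameter Cauchy bi-orthogonal polynomials with \langle P_n, Q_m \rangle = h_n \delta_{n,m}, h_n \neq 0. Set a_n = -\int P_{n+1} d\mu_1 / \int P_n d\mu_1. Then x(P_{n+1}(x^{\theta_1}) + a_n P_n(x^{\theta_1})) = \sum_{\alpha=n-k_2}^{n+k_1+1} \eta_{n,\alpha} P_\alpha(x^{\theta_1}), where \eta_{n,\alpha} = \langle x(P_{n+1}+a_n P_n), Q_\alpha \rangle / h_\alpha; i.e., the polynomials satisfy a (k_1+k_2+2)-term recurrence. -/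
open Polynomial

private lemma rep_aux (R : ℕ → Polynomial ℝ) (hm : ∀ i, (R i).Monic)
    (hd : ∀ i, (R i).natDegree = i) :
    ∀ N (f : Polynomial ℝ), f.degree < (N : ℕ) →
      ∃ c : ℕ → ℝ, f = ∑ α ∈ Finset.range N, Polynomial.C (c α) * R α := by
  intro N
  induction N with
  | zero =>
    intro f hf
    refine ⟨0, ?_⟩
    simp only [Finset.range_zero, Finset.sum_empty]
    ext m
    rw [(Polynomial.degree_lt_iff_coeff_zero f 0).1 (by exact_mod_cast hf) m (Nat.zero_le m)]
    simp
  | succ N ih =>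
    intro f hf
    have hg : (f - Polynomial.C (f.coeff N) * R N).degree < (N : ℕ) := by
      rw [Polynomial.degree_lt_iff_coeff_zero]
      intro m hm'
      rcases eq_or_lt_of_le hm' with rfl | hlt
      · simp only [Polynomial.coeff_sub, Polynomial.coeff_C_mul]
        have : (R N).coeff N = 1 := by
          have := (hm N).leadingCoeff
          rwa [Polynomial.leadingCoeff, hd N] at this
        rw [this]; ring
      · have h1 : f.coeff m = 0 := by
          apply Polynomial.coeff_eq_zero_of_degree_lt
          exact lt_of_lt_of_le hf (by exact_mod_cast Nat.succ_le_of_lt hlt)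
        have h2 : (R N).coeff m = 0 := by
          apply Polynomial.coeff_eq_zero_of_natDegree_lt
          rw [hd N]; exact hlt
        simp [h1, h2]
    obtain ⟨c, hc⟩ := ih _ hg
    refine ⟨fun α => if α = N then f.coeff N else c α, ?_⟩
    rw [Finset.sum_range_succ]
    have : ∀ α ∈ Finset.range N,
        Polynomial.C (if α = N then f.coeff N else c α) * R α = Polynomial.C (c α) * R α := by
      intro α hα
      rw [if_neg (Finset.mem_range.1 hα).ne]
    rw [Finset.sum_congr rfl this, ← hc]
    simp

/-- The `(k₁+k₂+2)`-term recurrence relation for the two-parameter Cauchy bi-orthogonal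
polynomials (in the variable `z = x^{θ₁}`, with `θᵢ = 1/kᵢ`, multiplication by `x`
is multiplication by `z^{k₁}` resp. `z^{k₂}`):
`x(P_{n+1} + a_n P_n) = ∑_{α=n-k₂}^{n+k₁+1} η_{n,α} P_α` with `η_{n,α} = ⟨x(P_{n+1}+a_nP_n), Q_α⟩/h_α`. -/
theorem stmt8 (k1 k2 : ℕ) (hk1 : 0 < k1) (hk2 : 0 < k2)
    (B : Polynomial ℝ →ₗ[ℝ] Polynomial ℝ →ₗ[ℝ] ℝ)
    (L1 L2 : Polynomial ℝ →ₗ[ℝ] ℝ)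
    (hshift : ∀ f g : Polynomial ℝ,
      B (Polynomial.X ^ k1 * f) g + B f (Polynomial.X ^ k2 * g) = L1 f * L2 g)
    (P Q : ℕ → Polynomial ℝ) (h : ℕ → ℝ)
    (hPmonic : ∀ n, (P n).Monic) (hPdeg : ∀ n, (P n).natDegree = n)
    (hQmonic : ∀ n, (Q n).Monic) (hQdeg : ∀ n, (Q n).natDegree = n)
    (horth : ∀ n m, B (P n) (Q m) = if n = m then h n else 0) (hh : ∀ n, h n ≠ 0)
    (n : ℕ) (a : ℝ) (hL : L1 (P n) ≠ 0) (ha : a = - L1 (P (n+1)) / L1 (P n)) :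
    Polynomial.X ^ k1 * (P (n+1) + Polynomial.C a * P n) =
      ∑ α ∈ Finset.Icc (n - k2) (n + k1 + 1),
        Polynomial.C (B (Polynomial.X ^ k1 * (P (n+1) + Polynomial.C a * P n)) (Q α) / h α)
          * P α := by
  set f : Polynomial ℝ := P (n+1) + Polynomial.C a * P n with hf
  set F : Polynomial ℝ := Polynomial.X ^ k1 * f with hFdef
  -- B (P m) g = 0 when g.degree < m
  have horthP : ∀ m (g : Polynomial ℝ), g.degree < (m : ℕ) → B (P m) g = 0 := by
    intro m g hg
    obtain ⟨c, hc⟩ := rep_aux Q hQmonic hQdeg m g hg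
    rw [hc, map_sum]
    apply Finset.sum_eq_zero
    intro β hβ
    rw [show Polynomial.C (c β) * Q β = (c β) • Q β by rw [Polynomial.smul_eq_C_mul],
      map_smul, smul_eq_mul, horth, if_neg (Finset.mem_range.1 hβ).ne', mul_zero]
  -- degree of f
  have hfdeg : f.degree ≤ ((n+1 : ℕ) : WithBot ℕ) := by
    apply le_trans (Polynomial.degree_add_le _ _)
    apply max_le
    · exact Polynomial.degree_le_natDegree.trans (by rw [hPdeg])
    · apply le_trans (Polynomial.degree_mul_le _ _)
      calc (Polynomial.C a).degree + (P n).degree ≤ 0 + ((n:ℕ) : WithBot ℕ) := by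
            apply add_le_add Polynomial.degree_C_le
            exact Polynomial.degree_le_natDegree.trans (by rw [hPdeg])
        _ ≤ ((n+1 : ℕ) : WithBot ℕ) := by rw [zero_add]; exact_mod_cast Nat.le_succ n
  have hFdeg : F.degree < ((n + k1 + 2 : ℕ) : WithBot ℕ) := by
    apply lt_of_le_of_lt (Polynomial.degree_mul_le _ _)
    calc (Polynomial.X ^ k1 : Polynomial ℝ).degree + f.degree
        ≤ ((k1:ℕ) : WithBot ℕ) + ((n+1:ℕ) : WithBot ℕ) := by
          apply add_le_add _ hfdeg
          exact Polynomial.degree_X_pow_le k1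
      _ = ((k1 + (n+1) : ℕ) : WithBot ℕ) := by push_cast; ring
      _ < ((n + k1 + 2 : ℕ) : WithBot ℕ) := by exact_mod_cast (by omega : k1 + (n+1) < n + k1 + 2)
  -- expansion of F
  obtain ⟨c, hc⟩ := rep_aux P hPmonic hPdeg (n + k1 + 2) F hFdeg
  have hBsum : ∀ β, B F (Q β) = ∑ α ∈ Finset.range (n + k1 + 2),
      c α * (if α = β then h α else 0) := by
    intro β
    rw [hc, map_sum, LinearMap.sum_apply]
    apply Finset.sum_congr rfl
    intro α _
    rw [show Polynomial.C (c α) * P α = (c α) • P α by rw [Polynomial.smul_eq_C_mul],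
      map_smul, LinearMap.smul_apply, smul_eq_mul, horth]
  have hcval : ∀ β ∈ Finset.range (n + k1 + 2), c β = B F (Q β) / h β := by
    intro β hβ
    rw [hBsum β, Finset.sum_eq_single β (fun α _ hne => by rw [if_neg hne, mul_zero])
      (fun hβ' => absurd hβ hβ'), if_pos rfl, mul_div_assoc,
      div_self (hh β), mul_one]
  -- vanishing of low coefficients
  have hvanish : ∀ α, α + k2 < n → B F (Q α) = 0 := by
    intro α hα
    have hL1f : L1 f = 0 := by
      rw [hf, map_add,
        show Polynomial.C a * P n = a • P n from (Polynomial.smul_eq_C_mul a).symm,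
        map_smul, smul_eq_mul, ha, div_mul_cancel₀ _ hL, add_neg_cancel]
    have hBf : B f (Polynomial.X ^ k2 * Q α) = 0 := by
      have hdeg : (Polynomial.X ^ k2 * Q α).degree < ((n : ℕ) : WithBot ℕ) := by
        apply lt_of_le_of_lt (Polynomial.degree_mul_le _ _)
        calc (Polynomial.X ^ k2 : Polynomial ℝ).degree + (Q α).degree
            ≤ ((k2:ℕ) : WithBot ℕ) + ((α:ℕ) : WithBot ℕ) := by
              exact add_le_add (Polynomial.degree_X_pow_le k2)
                (Polynomial.degree_le_natDegree.trans (by rw [hQdeg]))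
          _ = ((k2 + α : ℕ) : WithBot ℕ) := by push_cast; ring
          _ < ((n : ℕ) : WithBot ℕ) := by exact_mod_cast (by omega : k2 + α < n)
      rw [hf, map_add, LinearMap.add_apply]
      rw [show Polynomial.C a * P n = a • P n by rw [Polynomial.smul_eq_C_mul],
        map_smul, LinearMap.smul_apply, smul_eq_mul]
      rw [horthP (n+1) _ (lt_trans hdeg (by exact_mod_cast Nat.lt_succ_self n)),
        horthP n _ hdeg]
      ring
    have := hshift f (Q α)
    rw [hL1f, zero_mul, hBf, add_zero] at this
    exact this
  -- assemble
  have hrange : ∀ α ∈ Finset.range (n + k1 + 2),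
      Polynomial.C (c α) * P α = Polynomial.C (B F (Q α) / h α) * P α := by
    intro α hα; rw [hcval α hα]
  have hsplit : Finset.range (n + k1 + 2) =
      Finset.range (n - k2) ∪ Finset.Icc (n - k2) (n + k1 + 1) := by
    ext x
    simp [Finset.mem_range, Finset.mem_Icc]
    omega
  have hdisj : Disjoint (Finset.range (n - k2)) (Finset.Icc (n - k2) (n + k1 + 1)) := by
    rw [Finset.disjoint_left]
    intro x hx hx'
    simp only [Finset.mem_range] at hx
    simp only [Finset.mem_Icc] at hx'
    omega
  have hzero : ∑ α ∈ Finset.range (n - k2),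
      Polynomial.C (B F (Q α) / h α) * P α = 0 := by
    apply Finset.sum_eq_zero
    intro α hα
    rw [hvanish α (by have := Finset.mem_range.1 hα; omega), zero_div, map_zero, zero_mul]
  conv_lhs => rw [hc]
  rw [Finset.sum_congr rfl hrange, hsplit, Finset.sum_union hdisj, hzero, zero_add]
end

section
/- Let the time-dependent measures satisfy \partial_t d\mu_1(x;t) = x\, d\mu_1(x;t) and \partial_t d\mu_2(y;t) = y\, d\mu_2(y;t), and let P_n(\cdot;t), Q_n(\cdot;t) be the associated monic bi-orthogonal polynomials with \langle P_n, Q_m \rangle_t = h_n(t)\delta_{n,m}, and a_n(t) = -\int P_{n+1} d\mu_1/\int P_n d\mu_1. Then \partial_t(P_{n+1}(x^{\theta_1};t) + a_n(t) P_n(x^{\theta_1};t)) = \frac{\partial_t(a_n h_n)}{h_n} P_n(x^{\theta_1};t). -/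
open Polynomial

private lemma lin_sum (Φ : Polynomial ℝ →ₗ[ℝ] ℝ) (p : Polynomial ℝ) (N : ℕ)
    (hp : p.natDegree < N) :
    Φ p = ∑ i ∈ Finset.range N, p.coeff i * Φ (Polynomial.X ^ i) := by
  conv_lhs => rw [p.as_sum_range' N hp]
  rw [map_sum]
  refine Finset.sum_congr rfl fun i _ => ?_
  rw [← Polynomial.smul_X_eq_monomial, map_smul, smul_eq_mul]

/-- If a linear functional vanishes on monic polynomials of each degree `≤ m`,
it vanishes on all polynomials of degree `≤ m`. -/
private lemma span_vanish (Φ : Polynomial ℝ →ₗ[ℝ] ℝ) (Q : ℕ → Polynomial ℝ)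
    (hQm : ∀ n, (Q n).Monic) (hQd : ∀ n, (Q n).natDegree = n) :
    ∀ m, (∀ j ≤ m, Φ (Q j) = 0) → ∀ g : Polynomial ℝ, g.natDegree ≤ m → Φ g = 0 := by
  intro m
  induction m with
  | zero =>
    intro hΦ g hg
    have hq0 : Q 0 = 1 := ((hQm 0).natDegree_eq_zero).mp (hQd 0)
    have hgC : g = Polynomial.C (g.coeff 0) := Polynomial.eq_C_of_natDegree_le_zero hg
    have h2 : Polynomial.C (g.coeff 0) = g.coeff 0 • Q 0 := by
      rw [hq0, Polynomial.smul_eq_C_mul, mul_one]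
    rw [hgC, h2, map_smul, hΦ 0 le_rfl, smul_zero]
  | succ m ih =>
    intro hΦ g hg
    by_cases hgm : g.natDegree ≤ m
    · exact ih (fun j hj => hΦ j (hj.trans (Nat.le_succ m))) g hgm
    · have hdeg : g.natDegree = m + 1 := by omega
      have hg0 : g ≠ 0 := fun h0 => by simp [h0] at hdeg
      set c := g.leadingCoeff with hc
      have hcne : c ≠ 0 := Polynomial.leadingCoeff_ne_zero.mpr hg0
      set r := g - Polynomial.C c * Q (m+1) with hr
      have hrd : r.natDegree ≤ m := by
        rcases eq_or_ne r 0 with h0 | h0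
        · simp [h0]
        · have hdlt : r.degree < g.degree := by
            apply Polynomial.degree_sub_lt
            · rw [Polynomial.degree_C_mul hcne, Polynomial.degree_eq_natDegree hg0,
                Polynomial.degree_eq_natDegree (hQm (m+1)).ne_zero, hdeg, hQd]
            · exact hg0
            · rw [Polynomial.leadingCoeff_mul, Polynomial.leadingCoeff_C, (hQm (m+1)).leadingCoeff,
                mul_one]
          rw [Polynomial.degree_eq_natDegree hg0, hdeg] at hdlt
          have := (Polynomial.natDegree_lt_iff_degree_lt h0).mpr hdlt
          omega
      have hΦr : Φ r = 0 := ih (fun j hj => hΦ j (hj.trans (Nat.le_succ m))) r hrd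
      have hgr : g = r + c • Q (m+1) := by
        rw [hr, Polynomial.smul_eq_C_mul]; ring
      rw [hgr, map_add, map_smul, hΦr, hΦ (m+1) le_rfl, smul_zero, add_zero]

/-- A polynomial of degree `≤ m` which pairs to zero with all `Q j`, `j ≤ m`, is zero. -/
private lemma pairing_eq_zero (Bt : Polynomial ℝ →ₗ[ℝ] Polynomial ℝ →ₗ[ℝ] ℝ)
    (P Q : ℕ → Polynomial ℝ) (hPm : ∀ n, (P n).Monic) (hPd : ∀ n, (P n).natDegree = n)
    (h : ℕ → ℝ) (horth : ∀ n m, Bt (P n) (Q m) = if n = m then h n else 0)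
    (hh : ∀ n, h n ≠ 0) :
    ∀ m (g : Polynomial ℝ), g.natDegree ≤ m → (∀ j ≤ m, Bt g (Q j) = 0) → g = 0 := by
  intro m
  induction m with
  | zero =>
    intro g hg hBg
    have hp0 : P 0 = 1 := ((hPm 0).natDegree_eq_zero).mp (hPd 0)
    have hgC : g = Polynomial.C (g.coeff 0) := Polynomial.eq_C_of_natDegree_le_zero hg
    have h2 : Polynomial.C (g.coeff 0) = g.coeff 0 • P 0 := by
      rw [hp0, Polynomial.smul_eq_C_mul, mul_one]
    have h3 : Bt g (Q 0) = g.coeff 0 * h 0 := by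
      conv_lhs => rw [hgC, h2]
      rw [map_smul, LinearMap.smul_apply, horth 0 0, if_pos rfl, smul_eq_mul]
    have h4 := hBg 0 le_rfl
    rw [h3] at h4
    have h5 : g.coeff 0 = 0 := by
      rcases mul_eq_zero.mp h4 with h5 | h5
      · exact h5
      · exact absurd h5 (hh 0)
    rw [hgC, h5, map_zero]
  | succ m ih =>
    intro g hg hBg
    by_cases hgm : g.natDegree ≤ m
    · exact ih g hgm (fun j hj => hBg j (hj.trans (Nat.le_succ m)))
    · exfalso
      have hdeg : g.natDegree = m + 1 := by omega
      have hg0 : g ≠ 0 := fun h0 => by simp [h0] at hdeg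
      set c := g.leadingCoeff with hc
      have hcne : c ≠ 0 := Polynomial.leadingCoeff_ne_zero.mpr hg0
      set r := g - Polynomial.C c * P (m+1) with hr
      have hrd : r.natDegree ≤ m := by
        rcases eq_or_ne r 0 with h0 | h0
        · simp [h0]
        · have hdlt : r.degree < g.degree := by
            apply Polynomial.degree_sub_lt
            · rw [Polynomial.degree_C_mul hcne, Polynomial.degree_eq_natDegree hg0,
                Polynomial.degree_eq_natDegree (hPm (m+1)).ne_zero, hdeg, hPd]
            · exact hg0
            · rw [Polynomial.leadingCoeff_mul, Polynomial.leadingCoeff_C, (hPm (m+1)).leadingCoeff,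
                mul_one]
          rw [Polynomial.degree_eq_natDegree hg0, hdeg] at hdlt
          have := (Polynomial.natDegree_lt_iff_degree_lt h0).mpr hdlt
          omega
      have hgr : g = r + c • P (m+1) := by
        rw [hr, Polynomial.smul_eq_C_mul]; ring
      have hrB : ∀ j ≤ m, Bt r (Q j) = 0 := by
        intro j hj
        have h1 : Bt g (Q j) = Bt r (Q j) + c * Bt (P (m+1)) (Q j) := by
          rw [hgr]; simp [map_add, LinearMap.add_apply, map_smul, LinearMap.smul_apply,
            smul_eq_mul]
        have h2 : Bt (P (m+1)) (Q j) = 0 := by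
          rw [horth]; simp [show ¬ (m+1 = j) by omega]
        have h3 := hBg j (hj.trans (Nat.le_succ m))
        rw [h1, h2, mul_zero, add_zero] at h3
        exact h3
      have hr0 : r = 0 := ih r hrd hrB
      have hgP : g = c • P (m+1) := by rw [hgr, hr0, zero_add]
      have h4 := hBg (m+1) le_rfl
      rw [hgP, map_smul, LinearMap.smul_apply, horth (m+1) (m+1), if_pos rfl, smul_eq_mul] at h4
      rcases mul_eq_zero.mp h4 with h5 | h5
      · exact hcne h5
      · exact hh (m+1) h5

/-- Time evolution of the two-parameter Cauchy bi-orthogonal polynomials: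
`∂_t(P_{n+1} + a_n P_n) = (∂_t(a_n h_n)/h_n) P_n`, for the time-dependent Cauchy pairing
whose measures evolve by `∂_t dμ₁ = x dμ₁`, `∂_t dμ₂ = y dμ₂` (so that, in the variable
`z = x^{θᵢ}` with `θᵢ = 1/kᵢ`, `∂_t B(f,g) = B(z^{k₁}f, g) + B(f, z^{k₂}g)`). -/
theorem stmt9 (k1 k2 : ℕ) (hk1 : 0 < k1) (hk2 : 0 < k2)
    (B : ℝ → Polynomial ℝ →ₗ[ℝ] Polynomial ℝ →ₗ[ℝ] ℝ)
    (L1 L2 : ℝ → Polynomial ℝ →ₗ[ℝ] ℝ)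
    (hB : ∀ (f g : Polynomial ℝ) (t : ℝ),
      HasDerivAt (fun s => B s f g)
        (B t (Polynomial.X ^ k1 * f) g + B t f (Polynomial.X ^ k2 * g)) t)
    (hshift : ∀ (f g : Polynomial ℝ) (t : ℝ),
      B t (Polynomial.X ^ k1 * f) g + B t f (Polynomial.X ^ k2 * g) = L1 t f * L2 t g)
    (hL1d : ∀ (f : Polynomial ℝ) (t : ℝ),
      HasDerivAt (fun s => L1 s f) (L1 t (Polynomial.X ^ k1 * f)) t)
    (P Q P' : ℝ → ℕ → Polynomial ℝ)
    (hPmonic : ∀ t n, (P t n).Monic) (hPdeg : ∀ t n, (P t n).natDegree = n)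
    (hQmonic : ∀ t n, (Q t n).Monic) (hQdeg : ∀ t n, (Q t n).natDegree = n)
    (h : ℝ → ℕ → ℝ)
    (horth : ∀ t n m, B t (P t n) (Q t m) = if n = m then h t n else 0)
    (hh : ∀ t n, h t n ≠ 0)
    (hP' : ∀ (t : ℝ) (n i : ℕ),
      HasDerivAt (fun s => (P s n).coeff i) ((P' t n).coeff i) t)
    (a : ℝ → ℕ → ℝ)
    (haL : ∀ t n, L1 t (P t n) ≠ 0)
    (ha : ∀ t n, a t n = - L1 t (P t (n+1)) / L1 t (P t n))
    (t : ℝ) (n : ℕ) (a' h' : ℝ)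
    (ha' : HasDerivAt (fun s => a s n) a' t)
    (hh' : HasDerivAt (fun s => h s n) h' t) :
    P' t (n+1) + Polynomial.C a' * P t n + Polynomial.C (a t n) * P' t n =
      Polynomial.C ((a' * h t n + a t n * h') / h t n) * P t n := by
  -- coefficients of P' vanish from degree m on
  have hP'coeff : ∀ (m i : ℕ), m ≤ i → (P' t m).coeff i = 0 := by
    intro m i him
    have h1 := hP' t m i
    have hconst : ∃ cst : ℝ, (fun s => (P s m).coeff i) = fun _ => cst := by
      rcases eq_or_lt_of_le him with he | hlt
      · refine ⟨1, funext fun s => ?_⟩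
        have := (hPmonic s m).coeff_natDegree
        rw [hPdeg s m] at this
        rw [← he]; exact this
      · refine ⟨0, funext fun s => ?_⟩
        exact Polynomial.coeff_eq_zero_of_natDegree_lt (by rw [hPdeg]; exact hlt)
    obtain ⟨cst, hcst⟩ := hconst
    have h2 : HasDerivAt (fun s => (P s m).coeff i) 0 t := by
      rw [hcst]; exact hasDerivAt_const t cst
    exact h1.unique h2
  have hP'ndeg : ∀ m k : ℕ, m ≤ k + 1 → (P' t m).natDegree ≤ k :=
    fun m k hmk => Polynomial.natDegree_le_iff_coeff_eq_zero.mpr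
      (fun N hN => hP'coeff m N (by omega))
  -- derivative of s ↦ B s (P s m) g
  have hBP : ∀ (m : ℕ) (g : Polynomial ℝ),
      HasDerivAt (fun s => B s (P s m) g)
        (B t (P' t m) g +
          (B t (Polynomial.X ^ k1 * P t m) g + B t (P t m) (Polynomial.X ^ k2 * g))) t := by
    intro m g
    have hfe : (fun s => B s (P s m) g)
        = fun s => ∑ i ∈ Finset.range (m+1), (P s m).coeff i * B s (Polynomial.X ^ i) g := by
      funext s
      simpa [LinearMap.flip_apply] using
        lin_sum ((B s).flip g) (P s m) (m+1) (by rw [hPdeg]; omega)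
    have hder : HasDerivAt
        (fun s => ∑ i ∈ Finset.range (m+1), (P s m).coeff i * B s (Polynomial.X ^ i) g)
        (∑ i ∈ Finset.range (m+1),
          ((P' t m).coeff i * B t (Polynomial.X ^ i) g +
            (P t m).coeff i *
              (B t (Polynomial.X ^ k1 * Polynomial.X ^ i) g +
                B t (Polynomial.X ^ i) (Polynomial.X ^ k2 * g)))) t := by
      apply HasDerivAt.fun_sum
      intro i _
      exact (hP' t m i).mul (hB (Polynomial.X ^ i) g t)
    have hval : B t (P' t m) g +
        (B t (Polynomial.X ^ k1 * P t m) g + B t (P t m) (Polynomial.X ^ k2 * g))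
        = ∑ i ∈ Finset.range (m+1),
          ((P' t m).coeff i * B t (Polynomial.X ^ i) g +
            (P t m).coeff i *
              (B t (Polynomial.X ^ k1 * Polynomial.X ^ i) g +
                B t (Polynomial.X ^ i) (Polynomial.X ^ k2 * g))) := by
      rw [Finset.sum_add_distrib]
      congr 1
      · simpa [LinearMap.flip_apply] using
          lin_sum ((B t).flip g) (P' t m) (m+1)
            (Nat.lt_succ_of_le (hP'ndeg m m (by omega)))
      · have hsplit : (∑ i ∈ Finset.range (m+1), (P t m).coeff i *
            (B t (Polynomial.X ^ k1 * Polynomial.X ^ i) g +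
              B t (Polynomial.X ^ i) (Polynomial.X ^ k2 * g)))
            = (∑ i ∈ Finset.range (m+1),
                (P t m).coeff i * B t (Polynomial.X ^ k1 * Polynomial.X ^ i) g)
              + ∑ i ∈ Finset.range (m+1),
                (P t m).coeff i * B t (Polynomial.X ^ i) (Polynomial.X ^ k2 * g) := by
          rw [← Finset.sum_add_distrib]
          exact Finset.sum_congr rfl fun i _ => mul_add _ _ _
        rw [hsplit]
        congr 1
        · simpa [LinearMap.flip_apply, LinearMap.mulLeft_apply] using
            lin_sum (((B t).flip g).comp (LinearMap.mulLeft ℝ (Polynomial.X ^ k1)))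
              (P t m) (m+1) (by rw [hPdeg]; omega)
        · simpa [LinearMap.flip_apply] using
            lin_sum ((B t).flip (Polynomial.X ^ k2 * g)) (P t m) (m+1) (by rw [hPdeg]; omega)
    rw [hfe, hval]
    exact hder
  -- orthogonality to lower degrees, for arbitrary polynomials
  have hvan : ∀ (s : ℝ) (k : ℕ) (g : Polynomial ℝ), g.natDegree < k → B s (P s k) g = 0 := by
    intro s k g hgk
    exact span_vanish (B s (P s k)) (Q s) (hQmonic s) (hQdeg s) g.natDegree
      (fun j hj => by rw [horth]; simp [show ¬ (k = j) by omega]) g le_rfl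
  -- the main derivative identity
  have hz : L1 t (P t (n+1)) + a t n * L1 t (P t n) = 0 := by
    rw [ha, div_mul_cancel₀ _ (haL t n)]
    ring
  have hG : ∀ g : Polynomial ℝ,
      HasDerivAt (fun s => B s (P s (n+1)) g + a s n * B s (P s n) g)
        (B t (P' t (n+1) + Polynomial.C a' * P t n + Polynomial.C (a t n) * P' t n) g) t := by
    intro g
    have hsum := (hBP (n+1) g).add (ha'.mul (hBP n g))
    have hexp : B t (P' t (n+1) + Polynomial.C a' * P t n + Polynomial.C (a t n) * P' t n) g
        = B t (P' t (n+1)) g + a' * B t (P t n) g + a t n * B t (P' t n) g := by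
      simp only [map_add, LinearMap.add_apply, ← Polynomial.smul_eq_C_mul, map_smul,
        LinearMap.smul_apply, smul_eq_mul]
    rw [hexp]
    have e1 := hshift (P t (n+1)) g t
    have e2 := hshift (P t n) g t
    have hfin : B t (P' t (n+1)) g + a' * B t (P t n) g + a t n * B t (P' t n) g
        = B t (P' t (n+1)) g +
            (B t (Polynomial.X ^ k1 * P t (n+1)) g + B t (P t (n+1)) (Polynomial.X ^ k2 * g))
          + (a' * B t (P t n) g +
            a t n * (B t (P' t n) g +
              (B t (Polynomial.X ^ k1 * P t n) g + B t (P t n) (Polynomial.X ^ k2 * g)))) := by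
      linear_combination (-1 : ℝ) * e1 - a t n * e2 - L2 t g * hz
    rw [hfin]
    exact hsum
  -- pairing of the derivative polynomial with Q t m, m < n
  have hDlt : ∀ m, m < n →
      B t (P' t (n+1) + Polynomial.C a' * P t n + Polynomial.C (a t n) * P' t n) (Q t m) = 0 := by
    intro m hm
    have hzero : (fun s => B s (P s (n+1)) (Q t m) + a s n * B s (P s n) (Q t m))
        = fun _ => (0:ℝ) := by
      funext s
      rw [hvan s (n+1) (Q t m) (by rw [hQdeg]; omega), hvan s n (Q t m) (by rw [hQdeg]; omega)]
      ring
    have hg := hG (Q t m)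
    rw [hzero] at hg
    exact (hg.unique (hasDerivAt_const t 0))
  -- pairing with Q t n
  have hDn : B t (P' t (n+1) + Polynomial.C a' * P t n + Polynomial.C (a t n) * P' t n) (Q t n)
      = a' * h t n + a t n * h' := by
    have hfun : (fun s => B s (P s (n+1)) (Q t n) + a s n * B s (P s n) (Q t n))
        = fun s => a s n * h s n := by
      funext s
      have h1 : B s (P s (n+1)) (Q t n) = 0 :=
        hvan s (n+1) (Q t n) (by rw [hQdeg]; omega)
      have h2 : B s (P s n) (Q t n) = h s n := by
        have hd : B s (P s n) (Q t n - Q s n) = 0 := by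
          rcases eq_or_ne (Q t n) (Q s n) with he | hne
          · rw [he]; simp
          · have hsubne : Q t n - Q s n ≠ 0 := sub_ne_zero.mpr hne
            have hdlt : (Q t n - Q s n).degree < (Q t n).degree := by
              apply Polynomial.degree_sub_lt
              · rw [Polynomial.degree_eq_natDegree (hQmonic t n).ne_zero,
                  Polynomial.degree_eq_natDegree (hQmonic s n).ne_zero, hQdeg, hQdeg]
              · exact (hQmonic t n).ne_zero
              · rw [(hQmonic t n).leadingCoeff, (hQmonic s n).leadingCoeff]
            rw [Polynomial.degree_eq_natDegree (hQmonic t n).ne_zero, hQdeg] at hdlt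
            exact hvan s n _ ((Polynomial.natDegree_lt_iff_degree_lt hsubne).mpr hdlt)
        have hsplit : B s (P s n) (Q t n)
            = B s (P s n) (Q t n - Q s n) + B s (P s n) (Q s n) := by
          rw [← map_add, show Q t n - Q s n + Q s n = Q t n by ring]
        rw [hsplit, hd, horth s n n, if_pos rfl, zero_add]
      rw [h1, h2]; ring
    have hg := hG (Q t n)
    rw [hfun] at hg
    exact hg.unique (ha'.mul hh')
  -- assemble
  set c : ℝ := (a' * h t n + a t n * h') / h t n with hcdef
  set D : Polynomial ℝ := P' t (n+1) + Polynomial.C a' * P t n + Polynomial.C (a t n) * P' t n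
    with hDdef
  have hDdeg : D.natDegree ≤ n := by
    have b1 : (P' t (n+1)).natDegree ≤ n := hP'ndeg (n+1) n (by omega)
    have b2 : (Polynomial.C a' * P t n).natDegree ≤ n :=
      le_trans (Polynomial.natDegree_C_mul_le _ _) (le_of_eq (hPdeg t n))
    have b3 : (Polynomial.C (a t n) * P' t n).natDegree ≤ n :=
      le_trans (Polynomial.natDegree_C_mul_le _ _) (hP'ndeg n n (by omega))
    refine le_trans (Polynomial.natDegree_add_le _ _) (max_le ?_ b3)
    exact le_trans (Polynomial.natDegree_add_le _ _) (max_le b1 b2)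
  have hEdeg : (D - Polynomial.C c * P t n).natDegree ≤ n := by
    refine le_trans (Polynomial.natDegree_sub_le _ _) (max_le hDdeg ?_)
    exact le_trans (Polynomial.natDegree_C_mul_le _ _) (le_of_eq (hPdeg t n))
  have hEpair : ∀ j ≤ n, B t (D - Polynomial.C c * P t n) (Q t j) = 0 := by
    intro j hj
    have hsplit : B t (D - Polynomial.C c * P t n) (Q t j)
        = B t D (Q t j) - c * B t (P t n) (Q t j) := by
      rw [map_sub, LinearMap.sub_apply, ← Polynomial.smul_eq_C_mul, map_smul,
        LinearMap.smul_apply, smul_eq_mul]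
    rcases lt_or_eq_of_le hj with hlt | heq
    · rw [hsplit, hDlt j hlt, horth t n j, if_neg (by omega), mul_zero, sub_zero]
    · rw [hsplit, heq, hDn, horth t n n, if_pos rfl, hcdef,
        div_mul_cancel₀ _ (hh t n), sub_self]
  have hE0 : D - Polynomial.C c * P t n = 0 :=
    pairing_eq_zero (B t) (P t) (Q t) (hPmonic t) (hPdeg t) (h t) (horth t) (hh t)
      n (D - Polynomial.C c * P t n) hEdeg hEpair
  have := sub_eq_zero.mp hE0
  exact this
end

section
/- Let M be an (n+1) \times (n+1) matrix with entries in a commutative ring, and for index sets denote by M(i_1, i_2; j_1, j_2) the minor obtained by deleting rows i_1, i_2 and columns j_1, j_2, and M(i; j) the minor deleting row i and column j. Then the Jacobi (Desnanot) identity holds: \det M \cdot M(i_1, i_2; j_1, j_2) = M(i_1; j_1) M(i_2; j_2) - M(i_1; j_2) M(i_2; j_1), for i_1 < i_2, j_1 < j_2. -/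
open Matrix

section Aux

variable {R : Type*} [CommRing R] {ι : Type*} [DecidableEq ι] [Fintype ι]

/-- Double row-replacement multilinearity lemma. -/
lemma jacobi_aux_rows (A : Matrix ι ι R) {i1 i2 : ι} (h : i1 ≠ i2) (c1 c2 : ι → R) :
    det ((A.updateRow i1 (∑ l, c1 l • A l)).updateRow i2 (∑ l, c2 l • A l)) =
      (c1 i1 * c2 i2 - c1 i2 * c2 i1) * det A := by
  classical
  set d : (ι → R) [⋀^ι]→ₗ[R] R := detRowAlternating with hd
  set F : ι → ι → R :=
    fun l1 l2 => d (Function.update (Function.update A i2 (A l2)) i1 (A l1)) with hF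
  have hFvals : ∀ l1 l2,
      (Function.update (Function.update A i2 (A l2)) i1 (A l1)) i1 = A l1 ∧
      (Function.update (Function.update A i2 (A l2)) i1 (A l1)) i2 = A l2 ∧
      ∀ k, k ≠ i1 → k ≠ i2 →
        (Function.update (Function.update A i2 (A l2)) i1 (A l1)) k = A k := by
    intro l1 l2
    refine ⟨Function.update_self _ _ _, ?_, ?_⟩
    · erw [Function.update_of_ne (Ne.symm h), Function.update_self]
    · intro k hk1 hk2
      erw [Function.update_of_ne hk1, Function.update_of_ne hk2]
  have hF0 : ∀ l1 l2, l1 = l2 → F l1 l2 = 0 := by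
    intro l1 l2 hl
    obtain ⟨h1, h2, -⟩ := hFvals l1 l2
    exact d.map_eq_zero_of_eq _ (by rw [h1, h2, hl]) h
  have hF1 : ∀ l1 l2, l1 ≠ i1 → l1 ≠ i2 → F l1 l2 = 0 := by
    intro l1 l2 hl1 hl2
    obtain ⟨h1, -, h3⟩ := hFvals l1 l2
    exact d.map_eq_zero_of_eq _ (by rw [h1, h3 l1 hl1 hl2]) (Ne.symm hl1)
  have hF2 : ∀ l1 l2, l2 ≠ i1 → l2 ≠ i2 → F l1 l2 = 0 := by
    intro l1 l2 hl1 hl2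
    obtain ⟨-, h2, h3⟩ := hFvals l1 l2
    exact d.map_eq_zero_of_eq _ (h2.trans (h3 l2 hl1 hl2).symm) (fun hh => hl2 hh.symm)
  have hF12 : F i1 i2 = det A := by
    simp only [hF]; erw [Function.update_eq_self, Function.update_eq_self]; rfl
  have hF21 : F i2 i1 = -det A := by
    have : (Function.update (Function.update A i2 (A i1)) i1 (A i2))
        = A ∘ Equiv.swap i1 i2 := by
      funext k
      by_cases hk1 : k = i1
      · subst hk1; simp [Function.update_self, Equiv.swap_apply_left]
        exact congrArg A (Equiv.swap_apply_left k i2).symm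
      · by_cases hk2 : k = i2
        · subst hk2
          erw [Function.update_of_ne (Ne.symm h), Function.update_self]
          exact congrArg A (Equiv.swap_apply_right i1 k).symm
        · erw [Function.update_of_ne hk1, Function.update_of_ne hk2]
          exact congrArg A (Equiv.swap_apply_of_ne_of_ne hk1 hk2).symm
    rw [hF]; dsimp only; rw [this, d.map_swap A h]; rfl
  have dsum : ∀ (m : ι → ι → R) (i : ι) (g : ι → ι → R),
      d (Function.update m i (∑ l, g l)) = ∑ l, d (Function.update m i (g l)) :=
    fun m i g => d.toMultilinearMap.map_update_sum Finset.univ i g m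
  have key : det ((A.updateRow i1 (∑ l, c1 l • A l)).updateRow i2 (∑ l, c2 l • A l))
      = d (Function.update (Function.update A i1 (∑ l, c1 l • A l)) i2
          (∑ l, c2 l • A l)) := rfl
  rw [key, dsum _ i2 (fun l => c2 l • A l)]
  have step : ∀ l2, d (Function.update (Function.update A i1 (∑ l, c1 l • A l)) i2
      (c2 l2 • A l2)) = c2 l2 * ∑ l1, c1 l1 * F l1 l2 := by
    intro l2
    rw [d.map_update_smul, smul_eq_mul]
    congr 1
    erw [Function.update_comm h]
    rw [dsum _ i1 (fun l => c1 l • A l)]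
    refine Finset.sum_congr rfl fun l1 _ => ?_
    rw [d.map_update_smul, smul_eq_mul]
  simp only [step]
  have hsub : ∀ l2 ∈ Finset.univ, l2 ∉ ({i1, i2} : Finset ι) →
      c2 l2 * ∑ l1, c1 l1 * F l1 l2 = 0 := by
    intro l2 _ hl2
    simp only [Finset.mem_insert, Finset.mem_singleton, not_or] at hl2
    have : ∀ l1, c1 l1 * F l1 l2 = 0 := fun l1 => by
      rw [hF2 l1 l2 hl2.1 hl2.2, mul_zero]
    simp [this]
  rw [← Finset.sum_subset (Finset.subset_univ ({i1, i2} : Finset ι)) hsub,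
    Finset.sum_pair h]
  have hinner1 : (∑ l1, c1 l1 * F l1 i1) = c1 i2 * (-det A) := by
    rw [Finset.sum_eq_single i2]
    · rw [hF21]
    · intro l1 _ hl1
      by_cases hli : l1 = i1
      · rw [hF0 l1 i1 hli, mul_zero]
      · rw [hF1 l1 i1 hli hl1, mul_zero]
    · simp
  have hinner2 : (∑ l1, c1 l1 * F l1 i2) = c1 i1 * det A := by
    rw [Finset.sum_eq_single i1]
    · rw [hF12]
    · intro l1 _ hl1
      by_cases hli : l1 = i2
      · rw [hF0 l1 i2 hli, mul_zero]
      · rw [hF1 l1 i2 hl1 hli, mul_zero]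
    · simp
  rw [hinner1, hinner2]
  ring

/-- Double column-replacement multilinearity lemma. -/
lemma jacobi_aux_cols (A : Matrix ι ι R) {j1 j2 : ι} (h : j1 ≠ j2) (c1 c2 : ι → R) :
    det ((A.updateCol j1 (A *ᵥ c1)).updateCol j2 (A *ᵥ c2)) =
      (c1 j1 * c2 j2 - c1 j2 * c2 j1) * det A := by
  have hv : ∀ c : ι → R, A *ᵥ c = ∑ l, c l • (Aᵀ) l := by
    intro c
    funext k
    simp [mulVec, dotProduct, Finset.sum_apply, mul_comm, transpose_apply]
  have htr : (Aᵀ.updateRow j1 (A *ᵥ c1)).updateRow j2 (A *ᵥ c2) =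
      ((A.updateCol j1 (A *ᵥ c1)).updateCol j2 (A *ᵥ c2))ᵀ := by
    rw [updateRow_transpose, updateRow_transpose]
  have e1 : det ((A.updateCol j1 (A *ᵥ c1)).updateCol j2 (A *ᵥ c2)) =
      det ((Aᵀ.updateRow j1 (A *ᵥ c1)).updateRow j2 (A *ᵥ c2)) := by
    rw [htr, det_transpose]
  rw [e1, hv c1, hv c2, jacobi_aux_rows Aᵀ h c1 c2, det_transpose]

lemma my_updateCol_comm (A : Matrix ι ι R) {j1 j2 : ι} (h : j1 ≠ j2) (u v : ι → R) :
    (A.updateCol j1 u).updateCol j2 v = (A.updateCol j2 v).updateCol j1 u := by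
  ext a b
  by_cases h1 : b = j1 <;> by_cases h2 : b = j2 <;>
    simp_all [updateCol_apply]

lemma my_submatrix_updateCol {l o m' n' : Type*} [DecidableEq n'] [DecidableEq o]
    (A : Matrix m' n' R) (f : l → m') (g : o → n') (hg : Function.Injective g) (j : o)
    (v : m' → R) :
    (A.updateCol (g j) v).submatrix f g = (A.submatrix f g).updateCol j (v ∘ f) := by
  ext a b
  by_cases hb : b = j
  · subst hb; simp
  · have hgb : g b ≠ g j := fun hh => hb (hg hh)
    simp [updateCol_ne hgb, updateCol_ne hb]

lemma my_single_comp_succAbove {k : ℕ} (p : Fin (k + 1)) (i : Fin k) :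
    (Pi.single (p.succAbove i) (1 : R)) ∘ p.succAbove = Pi.single i 1 := by
  funext t
  simp [Pi.single_apply, (Fin.succAbove_right_injective (p := p)).eq_iff]

/-- Single cofactor expansion: determinant after replacing a column by a standard
basis vector. -/
lemma my_det_updateCol_single {k : ℕ} (A : Matrix (Fin (k + 1)) (Fin (k + 1)) R)
    (i j : Fin (k + 1)) :
    det (A.updateCol j (Pi.single i 1)) =
      (-1) ^ ((i : ℕ) + (j : ℕ)) * det (A.submatrix i.succAbove j.succAbove) := by
  have h := adjugate_fin_succ_eq_det_submatrix Aᵀ i j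
  rw [adjugate_apply, updateRow_transpose, det_transpose] at h
  rw [h, ← transpose_submatrix, det_transpose, Nat.add_comm (j : ℕ) (i : ℕ)]

end Aux

section Key

variable {R : Type*} [CommRing R]

/-- Double cofactor expansion. -/
lemma my_step1 {n : ℕ} (M : Matrix (Fin (n+2)) (Fin (n+2)) R)
    (i1 i2 j1 j2 : Fin (n+2)) (hi : i1 < i2) (hj : j1 < j2) :
    det ((M.updateCol j1 (Pi.single i1 1)).updateCol j2 (Pi.single i2 1)) =
      (-1) ^ ((i1 : ℕ) + (j1 : ℕ) + (i2 : ℕ) + (j2 : ℕ)) *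
      (M.submatrix
        (i2.succAbove ∘ (Fin.mk (i1:ℕ) (by have := hi; omega : (i1:ℕ) < n+1)).succAbove)
        (j2.succAbove ∘ (Fin.mk (j1:ℕ) (by have := hj; omega : (j1:ℕ) < n+1)).succAbove)).det := by
  set i1' : Fin (n+1) := ⟨(i1:ℕ), by omega⟩ with hi1'
  set j1' : Fin (n+1) := ⟨(j1:ℕ), by omega⟩ with hj1'
  have hii : i2.succAbove i1' = i1 := by
    rw [Fin.succAbove_of_castSucc_lt]
    · exact Fin.ext rfl
    · rw [Fin.lt_def]; exact Fin.lt_def.mp hi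
  have hjj : j2.succAbove j1' = j1 := by
    rw [Fin.succAbove_of_castSucc_lt]
    · exact Fin.ext rfl
    · rw [Fin.lt_def]; exact Fin.lt_def.mp hj
  have hsubu : ((M.updateCol j1 (Pi.single i1 1))).submatrix i2.succAbove j2.succAbove
      = (M.submatrix i2.succAbove j2.succAbove).updateCol j1'
          ((Pi.single i1 1) ∘ i2.succAbove) := by
    rw [← hjj]
    exact my_submatrix_updateCol _ _ _ (Fin.succAbove_right_injective (p := j2)) j1' _
  rw [my_det_updateCol_single _ i2 j2, hsubu]
  have hcomp : (Pi.single i1 (1:R)) ∘ i2.succAbove = Pi.single i1' 1 := by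
    rw [← hii]; exact my_single_comp_succAbove i2 i1'
  rw [hcomp, my_det_updateCol_single _ i1' j1', submatrix_submatrix, ← mul_assoc,
    ← pow_add]
  have hexp : ((i2:ℕ) + (j2:ℕ)) + ((i1':ℕ) + (j1':ℕ)) =
      (i1 : ℕ) + (j1 : ℕ) + (i2 : ℕ) + (j2 : ℕ) := by
    simp only [hi1', hj1']
    omega
  rw [hexp]

/-- Jacobi identity multiplied by `det M` (valid over any commutative ring). -/
lemma my_keyA {n : ℕ} (M : Matrix (Fin (n+2)) (Fin (n+2)) R)
    (i1 i2 j1 j2 : Fin (n+2)) (hi : i1 < i2) (hj : j1 < j2) :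
    M.det * (M.det *
      (M.submatrix
        (i2.succAbove ∘ (Fin.mk (i1:ℕ) (by have := hi; omega : (i1:ℕ) < n+1)).succAbove)
        (j2.succAbove ∘ (Fin.mk (j1:ℕ) (by have := hj; omega : (j1:ℕ) < n+1)).succAbove)).det) =
    M.det *
    ((M.submatrix i1.succAbove j1.succAbove).det * (M.submatrix i2.succAbove j2.succAbove).det -
     (M.submatrix i1.succAbove j2.succAbove).det * (M.submatrix i2.succAbove j1.succAbove).det) := by
  classical
  set D := M.det with hD
  set B := adjugate M with hB
  have hmv : ∀ i : Fin (n+2), M *ᵥ (fun k => B k i) = D • (Pi.single i 1 : Fin (n+2) → R) := by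
    intro i
    funext k
    have h := congrFun (congrFun (mul_adjugate M) k) i
    simpa [mul_apply, mulVec, dotProduct, one_apply, Pi.single_apply] using h
  have hE := jacobi_aux_cols M hj.ne (fun k => B k i1) (fun k => B k i2)
  simp only [hmv i1, hmv i2] at hE
  -- compute the left side of hE
  have hL : det ((M.updateCol j1 (D • (Pi.single i1 1 : Fin (n+2) → R))).updateCol j2
      (D • (Pi.single i2 1 : Fin (n+2) → R))) = D * (D *
        det ((M.updateCol j1 (Pi.single i1 1)).updateCol j2 (Pi.single i2 1))) := by
    rw [det_updateCol_smul, my_updateCol_comm _ hj.ne, det_updateCol_smul,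
      my_updateCol_comm _ hj.ne.symm]
  rw [hL, my_step1 M i1 i2 j1 j2 hi hj] at hE
  -- adjugate entries as signed minors
  have hb : ∀ (i j : Fin (n+2)), B j i =
      (-1) ^ ((i : ℕ) + (j : ℕ)) * det (M.submatrix i.succAbove j.succAbove) := by
    intro i j
    rw [hB, adjugate_fin_succ_eq_det_submatrix]
  rw [hb i1 j1, hb i2 j2, hb i1 j2, hb i2 j1] at hE
  set e : ℕ := (i1 : ℕ) + (j1 : ℕ) + (i2 : ℕ) + (j2 : ℕ) with he
  set m11 := det (M.submatrix i1.succAbove j1.succAbove)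
  set m22 := det (M.submatrix i2.succAbove j2.succAbove)
  set m12 := det (M.submatrix i1.succAbove j2.succAbove)
  set m21 := det (M.submatrix i2.succAbove j1.succAbove)
  set m2 := (M.submatrix
        (i2.succAbove ∘ (Fin.mk (i1:ℕ) (by have := hi; omega : (i1:ℕ) < n+1)).succAbove)
        (j2.succAbove ∘ (Fin.mk (j1:ℕ) (by have := hj; omega : (j1:ℕ) < n+1)).succAbove)).det
  -- hE : D * (D * ((-1)^e * m2)) = ((-1)^(i1+j1) m11 * ((-1)^(i2+j2) m22) - ...) * D
  have hsign : ((-1 : R) ^ ((i1:ℕ)+(j1:ℕ))) * ((-1 : R) ^ ((i2:ℕ)+(j2:ℕ))) = (-1) ^ e := by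
    rw [← pow_add]; congr 1; omega
  have hsign' : ((-1 : R) ^ ((i1:ℕ)+(j2:ℕ))) * ((-1 : R) ^ ((i2:ℕ)+(j1:ℕ))) = (-1) ^ e := by
    rw [← pow_add]; congr 1; omega
  have hcancel : ((-1 : R) ^ e) * ((-1 : R) ^ e) = 1 := by
    rw [← pow_add]
    exact Even.neg_one_pow ⟨e, rfl⟩
  have expand : ((-1:R)^((i1:ℕ)+(j1:ℕ)) * m11 * ((-1:R)^((i2:ℕ)+(j2:ℕ)) * m22) -
      (-1:R)^((i1:ℕ)+(j2:ℕ)) * m12 * ((-1:R)^((i2:ℕ)+(j1:ℕ)) * m21)) =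
      (-1:R)^e * (m11 * m22 - m12 * m21) := by
    have t1 : (-1:R)^((i1:ℕ)+(j1:ℕ)) * m11 * ((-1:R)^((i2:ℕ)+(j2:ℕ)) * m22) =
        (-1:R)^e * (m11 * m22) := by rw [← hsign]; ring
    have t2 : (-1:R)^((i1:ℕ)+(j2:ℕ)) * m12 * ((-1:R)^((i2:ℕ)+(j1:ℕ)) * m21) =
        (-1:R)^e * (m12 * m21) := by rw [← hsign']; ring
    rw [t1, t2, ← mul_sub]
  rw [expand] at hE
  linear_combination ((-1:R)^e) * hE -
    (D * D * m2 - D * (m11 * m22 - m12 * m21)) * hcancel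

end Key

/-- The Jacobi (Desnanot–Jacobi) determinant identity:
`det M · M(i₁,i₂;j₁,j₂) = M(i₁;j₁)M(i₂;j₂) - M(i₁;j₂)M(i₂;j₁)` for `i₁<i₂`, `j₁<j₂`,
where `M(i;j)` denotes the minor deleting row `i` and column `j`. -/
theorem stmt11 {R : Type*} [CommRing R] (n : ℕ) (M : Matrix (Fin (n+2)) (Fin (n+2)) R)
    (i1 i2 j1 j2 : Fin (n+2)) (hi : i1 < i2) (hj : j1 < j2) :
    M.det *
      (M.submatrix
        (i2.succAbove ∘ (Fin.mk (i1:ℕ) (by omega : (i1:ℕ) < n+1)).succAbove)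
        (j2.succAbove ∘ (Fin.mk (j1:ℕ) (by omega : (j1:ℕ) < n+1)).succAbove)).det =
    (M.submatrix i1.succAbove j1.succAbove).det * (M.submatrix i2.succAbove j2.succAbove).det -
    (M.submatrix i1.succAbove j2.succAbove).det * (M.submatrix i2.succAbove j1.succAbove).det := by
  classical
  let A' := mvPolynomialX (Fin (n+2)) (Fin (n+2)) ℤ
  have hgen : A'.det *
      (A'.submatrix
        (i2.succAbove ∘ (Fin.mk (i1:ℕ) (by omega : (i1:ℕ) < n+1)).succAbove)
        (j2.succAbove ∘ (Fin.mk (j1:ℕ) (by omega : (j1:ℕ) < n+1)).succAbove)).det =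
      (A'.submatrix i1.succAbove j1.succAbove).det * (A'.submatrix i2.succAbove j2.succAbove).det -
      (A'.submatrix i1.succAbove j2.succAbove).det * (A'.submatrix i2.succAbove j1.succAbove).det :=
    mul_left_cancel₀ (det_mvPolynomialX_ne_zero (Fin (n+2)) ℤ)
      (my_keyA A' i1 i2 j1 j2 hi hj)
  have happ := congrArg (MvPolynomial.aeval fun p : Fin (n+2) × Fin (n+2) => M p.1 p.2) hgen
  let φ : MvPolynomial (Fin (n+2) × Fin (n+2)) ℤ →ₐ[ℤ] R :=
    MvPolynomial.aeval fun p : Fin (n+2) × Fin (n+2) => M p.1 p.2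
  have hφ : φ.mapMatrix A' = M := mvPolynomialX_mapMatrix_aeval ℤ M
  have hsub : ∀ (f g : Fin (n+1) → Fin (n+2)),
      φ ((A'.submatrix f g).det) = ((M.submatrix f g)).det := by
    intro f g
    rw [AlgHom.map_det]
    have hm : φ.mapMatrix (A'.submatrix f g) = (φ.mapMatrix A').submatrix f g := by
      ext a b
      simp [AlgHom.mapMatrix_apply, submatrix_map]
    rw [hm, hφ]
  have hsub' : ∀ (f g : Fin n → Fin (n+2)),
      φ ((A'.submatrix f g).det) = ((M.submatrix f g)).det := by
    intro f g
    rw [AlgHom.map_det]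
    have hm : φ.mapMatrix (A'.submatrix f g) = (φ.mapMatrix A').submatrix f g := by
      ext a b
      simp [AlgHom.mapMatrix_apply, submatrix_map]
    rw [hm, hφ]
  have hdet : φ A'.det = M.det := by rw [AlgHom.map_det, hφ]
  rw [_root_.map_mul, _root_.map_sub, _root_.map_mul, _root_.map_mul, hdet,
    hsub, hsub, hsub, hsub, hsub'] at happ
  exact happ
end

section
/- Let m_{i,j}(t) satisfy \partial_t m_{i,j} = \hat{\phi}_i(t) \phi_j(t) for functions \hat{\phi}_i, \phi_j with \partial_t \hat{\phi}_i = \hat{\phi}_{i+1} and \partial_t \phi_j = \phi_{j+1}. Define \tau_n = \det(m_{i,j})_{i,j=0}^{n-1}, \sigma_n = \det of the (n+1)\times(n+1) matrix with rows (m_{i,j})_{i=0..n-1, j=0..n} and bottom row (\phi_0, \ldots, \phi_n), and \hat{\sigma}_n = \det of the matrix with columns (m_{i,j})_{i=0..n, j=0..n-1} and last column (\hat{\phi}_0, \ldots, \hat{\phi}_n)^T. Then the Hirota bilinear equation D_t \tau_{n+1} \cdot \tau_n = \sigma_n \hat{\sigma}_n holds, where D_t f \cdot g = (\partial_t f) g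 - f (\partial_t g). -/
open Matrix Finset in
lemma hasDerivAt_det' {N : ℕ} {M : ℝ → Matrix (Fin N) (Fin N) ℝ} {M' : Matrix (Fin N) (Fin N) ℝ} {t : ℝ}
    (h : ∀ i j, HasDerivAt (fun s => M s i j) (M' i j) t) :
    HasDerivAt (fun s => (M s).det)
      (∑ j : Fin N, ((M t).updateCol j (fun i => M' i j)).det) t := by
  have h1 : ∀ σ : Equiv.Perm (Fin N), HasDerivAt (fun s => ∏ i, M s (σ i) i)
      (∑ j, (∏ i ∈ Finset.univ.erase j, M t (σ i) i) * M' (σ j) j) t := by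
    intro σ
    simpa [smul_eq_mul] using
      HasDerivAt.fun_finsetProd (u := Finset.univ) (f := fun i s => M s (σ i) i)
        (f' := fun i => M' (σ i) i) (fun i _ => h (σ i) i)
  have h2 : HasDerivAt (fun s => (M s).det)
      (∑ σ : Equiv.Perm (Fin N), ((Equiv.Perm.sign σ : ℤ) : ℝ) *
        ∑ j, (∏ i ∈ Finset.univ.erase j, M t (σ i) i) * M' (σ j) j) t := by
    simp only [Matrix.det_apply']
    exact HasDerivAt.fun_sum fun σ _ => (h1 σ).const_mul _
  convert h2 using 1
  simp only [Finset.mul_sum]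
  rw [Finset.sum_comm]
  refine Finset.sum_congr rfl fun j _ => ?_
  rw [Matrix.det_apply']
  refine Finset.sum_congr rfl fun σ _ => ?_
  congr 1
  rw [← Finset.mul_prod_erase Finset.univ _ (Finset.mem_univ j)]
  rw [Matrix.updateCol_self]
  rw [Finset.prod_congr rfl fun i hi => ?_]
  · ring
  · rw [Matrix.updateCol_apply, if_neg (Finset.ne_of_mem_erase hi)]


open Matrix Polynomial in
lemma finite_bad {k : ℕ} (M : Matrix (Fin k) (Fin k) ℝ) :
    {ε : ℝ | (M + ε • 1).det = 0}.Finite := by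
  have key : ∀ ε : ℝ, ((-M).charpoly).eval ε = (M + ε • 1).det := by
    intro ε
    rw [Matrix.charpoly, ← Polynomial.coe_evalRingHom, RingHom.map_det]
    congr 1
    ext i j
    by_cases hij : i = j
    · subst hij
      simp [Matrix.charmatrix_apply_eq, Matrix.add_apply, Matrix.one_apply]; ring
    · simp [Matrix.charmatrix_apply_ne _ _ _ hij, Matrix.add_apply, Matrix.one_apply, hij]
  have h0 : (-M).charpoly ≠ 0 := ((-M).charpoly_monic).ne_zero
  refine Set.Finite.subset (Polynomial.finite_setOf_isRoot h0) ?_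
  intro ε hε
  simp only [Set.mem_setOf_eq, Polynomial.IsRoot] at *
  rw [key]; exact hε

open Topology in
lemma perturb_eq {f g : ℝ → ℝ} (hf : Continuous f) (hg : Continuous g) {S : Set ℝ}
    (hS : S.Finite) (h : ∀ ε ∉ S, f ε = g ε) : f 0 = g 0 := by
  have hT : (S \ {0} : Set ℝ).Finite := hS.diff
  have hop : IsOpen (S \ {0} : Set ℝ)ᶜ := hT.isClosed.isOpen_compl
  have h0 : (0:ℝ) ∈ (S \ {0} : Set ℝ)ᶜ := by simp
  have hev : ∀ᶠ ε in 𝓝[≠] (0:ℝ), f ε = g ε := by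
    filter_upwards [eventually_nhdsWithin_of_eventually_nhds (hop.mem_nhds h0),
      self_mem_nhdsWithin] with ε h1 h2
    refine h ε fun hεS => h1 ⟨hεS, h2⟩
  have hfc : Filter.Tendsto f (𝓝[≠] (0:ℝ)) (nhds (f 0)) :=
    (hf.continuousAt.tendsto).mono_left nhdsWithin_le_nhds
  have hgc : Filter.Tendsto g (𝓝[≠] (0:ℝ)) (nhds (g 0)) :=
    (hg.continuousAt.tendsto).mono_left nhdsWithin_le_nhds
  exact tendsto_nhds_unique (hfc.congr' hev) hgc


open Matrix in
lemma det_blocks {k l : ℕ} (E : Matrix (Fin (k+l)) (Fin (k+l)) ℝ) :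
    E.det = (Matrix.fromBlocks
      (E.submatrix (Fin.castAdd l) (Fin.castAdd l)) (E.submatrix (Fin.castAdd l) (Fin.natAdd k))
      (E.submatrix (Fin.natAdd k) (Fin.castAdd l)) (E.submatrix (Fin.natAdd k) (Fin.natAdd k))).det := by
  rw [← Matrix.det_submatrix_equiv_self finSumFinEquiv E]
  congr 1
  ext i j
  rcases i with i | i <;> rcases j with j | j <;>
    simp [Matrix.submatrix_apply, finSumFinEquiv_apply_left, finSumFinEquiv_apply_right]

open Matrix in
/-- Schur: determinant of a once-bordered matrix. -/
lemma det_border1 {k : ℕ} (a : ℕ → ℕ → ℝ) (u v : ℕ → ℝ) (d : ℝ)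
    (hA : IsUnit (Matrix.of fun i j : Fin k => a i j).det) :
    (Matrix.of fun i j : Fin (k+1) =>
        if (i:ℕ) < k then (if (j:ℕ) < k then a i j else u i)
        else (if (j:ℕ) < k then v j else d)).det
    = (Matrix.of fun i j : Fin k => a i j).det *
        (d - ∑ i : Fin k, ∑ j : Fin k,
          v i * (Matrix.of fun i j : Fin k => a i j)⁻¹ i j * u j) := by
  set A : Matrix (Fin k) (Fin k) ℝ := Matrix.of fun i j : Fin k => a i j with hAdef
  have : Invertible A := A.invertibleOfIsUnitDet hA
  rw [det_blocks]
  have e11 : (Matrix.of fun i j : Fin (k+1) =>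
        if (i:ℕ) < k then (if (j:ℕ) < k then a i j else u i)
        else (if (j:ℕ) < k then v j else d)).submatrix (Fin.castAdd 1) (Fin.castAdd 1) = A := by
    ext i j; simp [hAdef, Fin.coe_castAdd, i.isLt, j.isLt]
  rw [e11, Matrix.det_fromBlocks₁₁, Matrix.invOf_eq_nonsing_inv]
  congr 1
  rw [Matrix.det_fin_one]
  simp only [Matrix.sub_apply, Matrix.mul_apply, Matrix.submatrix_apply, Matrix.of_apply,
    Fin.coe_castAdd, Fin.coe_natAdd]
  simp only [show ¬ (k + ((0:Fin 1):ℕ) < k) by simp, if_false, Fin.is_lt, if_true,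
    Finset.sum_mul]
  rw [Finset.sum_comm]


open Matrix in
/-- Schur: determinant of a twice-bordered matrix, around the `k × k` core. -/
lemma det_border2 {k : ℕ} (a : ℕ → ℕ → ℝ) (u v : ℕ → ℝ)
    (hA : IsUnit (Matrix.of fun i j : Fin k => a i j).det) :
    (Matrix.of fun i j : Fin (k+2) =>
        if (i:ℕ) < k+1 then (if (j:ℕ) < k+1 then a i j else u i)
        else (if (j:ℕ) < k+1 then v j else 0)).det
    = (Matrix.of fun i j : Fin k => a i j).det *
        ((a k k - ∑ i : Fin k, ∑ j : Fin k, a k i * (Matrix.of fun i j : Fin k => a i j)⁻¹ i j * a j k) *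
          (0 - ∑ i : Fin k, ∑ j : Fin k, v i * (Matrix.of fun i j : Fin k => a i j)⁻¹ i j * u j) -
         (u k - ∑ i : Fin k, ∑ j : Fin k, a k i * (Matrix.of fun i j : Fin k => a i j)⁻¹ i j * u j) *
          (v k - ∑ i : Fin k, ∑ j : Fin k, v i * (Matrix.of fun i j : Fin k => a i j)⁻¹ i j * a j k)) := by
  set A : Matrix (Fin k) (Fin k) ℝ := Matrix.of fun i j : Fin k => a i j with hAdef
  have : Invertible A := A.invertibleOfIsUnitDet hA
  rw [det_blocks]
  have e11 : (Matrix.of fun i j : Fin (k+2) =>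
        if (i:ℕ) < k+1 then (if (j:ℕ) < k+1 then a i j else u i)
        else (if (j:ℕ) < k+1 then v j else 0)).submatrix (Fin.castAdd 2) (Fin.castAdd 2) = A := by
    ext i j
    have hi : (i:ℕ) < k + 1 := Nat.lt_succ_of_lt i.isLt
    have hj : (j:ℕ) < k + 1 := Nat.lt_succ_of_lt j.isLt
    simp [hAdef, Fin.coe_castAdd, i.isLt, j.isLt, hi, hj]
  rw [e11, Matrix.det_fromBlocks₁₁, Matrix.invOf_eq_nonsing_inv]
  congr 1
  rw [Matrix.det_fin_two]
  simp only [Matrix.sub_apply, Matrix.mul_apply, Matrix.submatrix_apply, Matrix.of_apply,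
    Fin.coe_castAdd, Fin.coe_natAdd, Fin.is_lt, if_true, Finset.sum_mul]
  norm_num
  have hlt : ∀ x : Fin k, (x:ℕ) < k + 1 := fun x => Nat.lt_succ_of_lt x.isLt
  have e1 : (∑ x : Fin k, ∑ x1 : Fin k, a k ↑x1 * A⁻¹ x1 x * a (↑x) k)
      = ∑ i : Fin k, ∑ j : Fin k, a k ↑i * A⁻¹ i j * a (↑j) k := Finset.sum_comm
  have e2 : (∑ x : Fin k, ∑ x1 : Fin k, v ↑x1 * A⁻¹ x1 x * u ↑x)
      = ∑ i : Fin k, ∑ j : Fin k, v ↑i * A⁻¹ i j * u ↑j := Finset.sum_comm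
  have e3 : (∑ x : Fin k, ∑ x1 : Fin k, a k ↑x1 * A⁻¹ x1 x * u ↑x)
      = ∑ i : Fin k, ∑ j : Fin k, a k ↑i * A⁻¹ i j * u ↑j := Finset.sum_comm
  have e4 : (∑ x : Fin k, ∑ x1 : Fin k, v ↑x1 * A⁻¹ x1 x * a (↑x) k)
      = ∑ i : Fin k, ∑ j : Fin k, v ↑i * A⁻¹ i j * a (↑j) k := Finset.sum_comm
  rw [e1, e2, e3, e4]


open Matrix in
lemma sum_cramer' {N : ℕ} (M : Matrix (Fin N) (Fin N) ℝ) (h : IsUnit M.det)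
    (w z : Fin N → ℝ) :
    ∑ j, w j * (M.updateCol j z).det
      = M.det * ∑ i, ∑ j, w i * M⁻¹ i j * z j := by
  have hadj : M.adjugate = M.det • M⁻¹ := by
    rw [Matrix.inv_def, smul_smul, Ring.mul_inverse_cancel _ h, one_smul]
  have hc : ∀ j, (M.updateCol j z).det = (M.adjugate *ᵥ z) j := by
    intro j
    rw [← Matrix.cramer_apply, Matrix.cramer_eq_adjugate_mulVec]
  simp only [hc, hadj, Matrix.smul_mulVec, Pi.smul_apply, Matrix.smul_apply, smul_eq_mul,
    Matrix.mulVec, dotProduct, Finset.mul_sum]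
  exact Finset.sum_congr rfl fun i _ => Finset.sum_congr rfl fun j _ => by ring

open Matrix in
lemma master_inv (n : ℕ) (b : ℕ → ℕ → ℝ) (f g : ℕ → ℝ)
    (h0 : IsUnit (Matrix.of fun i j : Fin n => b i j).det)
    (h1 : IsUnit (Matrix.of fun i j : Fin (n+1) => b i j).det) :
    (∑ j : Fin (n+1), f j *
        ((Matrix.of fun i j : Fin (n+1) => b i j).updateCol j (fun i => g i)).det) *
      (Matrix.of fun i j : Fin n => b i j).det
    - (Matrix.of fun i j : Fin (n+1) => b i j).det *
      (∑ j : Fin n, f j *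
        ((Matrix.of fun i j : Fin n => b i j).updateCol j (fun i => g i)).det)
    = (Matrix.of fun i j : Fin (n+1) => if (i:ℕ) < n then b i j else f j).det *
      (Matrix.of fun i j : Fin (n+1) => if (j:ℕ) < n then b i j else g i).det := by
  have s1 := sum_cramer' (Matrix.of fun i j : Fin n => b i j) h0 (fun j => f j) (fun i => g i)
  have s2 := sum_cramer' (Matrix.of fun i j : Fin (n+1) => b i j) h1 (fun j => f j) (fun i => g i)
  -- the twice-bordered determinant, two ways
  have s37 : (Matrix.of fun i j : Fin (n+1) => b i j).det *
      (0 - ∑ i : Fin (n+1), ∑ j : Fin (n+1),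
        f i * (Matrix.of fun i j : Fin (n+1) => b i j)⁻¹ i j * g j)
      = (Matrix.of fun i j : Fin n => b i j).det *
        ((b n n - ∑ i : Fin n, ∑ j : Fin n, b n i * (Matrix.of fun i j : Fin n => b i j)⁻¹ i j * b j n) *
          (0 - ∑ i : Fin n, ∑ j : Fin n, f i * (Matrix.of fun i j : Fin n => b i j)⁻¹ i j * g j) -
         (g n - ∑ i : Fin n, ∑ j : Fin n, b n i * (Matrix.of fun i j : Fin n => b i j)⁻¹ i j * g j) *
          (f n - ∑ i : Fin n, ∑ j : Fin n, f i * (Matrix.of fun i j : Fin n => b i j)⁻¹ i j * b j n)) :=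
    (det_border1 (k := n+1) b g f 0 h1).symm.trans (det_border2 (k := n) b g f h0)
  -- A₁ as a bordered matrix
  have s4 : (Matrix.of fun i j : Fin (n+1) => b i j).det
      = (Matrix.of fun i j : Fin n => b i j).det *
        (b n n - ∑ i : Fin n, ∑ j : Fin n, b n i * (Matrix.of fun i j : Fin n => b i j)⁻¹ i j * b j n) := by
    rw [show (Matrix.of fun i j : Fin (n+1) => b i j)
        = (Matrix.of fun i j : Fin (n+1) =>
            if (i:ℕ) < n then (if (j:ℕ) < n then b i j else b i n)
            else (if (j:ℕ) < n then b n j else b n n)) from ?_,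
      det_border1 b (fun i => b i n) (fun j => b n j) (b n n) h0]
    ext i j
    have hi := i.isLt; have hj := j.isLt
    simp only [Matrix.of_apply]
    split_ifs with h h' h' <;> first
      | rfl
      | (congr 1 <;> omega)
  have s5 : (Matrix.of fun i j : Fin (n+1) => if (i:ℕ) < n then b i j else f j).det
      = (Matrix.of fun i j : Fin n => b i j).det *
        (f n - ∑ i : Fin n, ∑ j : Fin n, f i * (Matrix.of fun i j : Fin n => b i j)⁻¹ i j * b j n) := by
    rw [show (Matrix.of fun i j : Fin (n+1) => if (i:ℕ) < n then b i j else f j)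
        = (Matrix.of fun i j : Fin (n+1) =>
            if (i:ℕ) < n then (if (j:ℕ) < n then b i j else b i n)
            else (if (j:ℕ) < n then f j else f n)) from ?_,
      det_border1 b (fun i => b i n) (fun j => f j) (f n) h0]
    ext i j
    have hi := i.isLt; have hj := j.isLt
    simp only [Matrix.of_apply]
    split_ifs with h h' h' <;> first
      | rfl
      | (congr 1 <;> omega)
  have s6 : (Matrix.of fun i j : Fin (n+1) => if (j:ℕ) < n then b i j else g i).det
      = (Matrix.of fun i j : Fin n => b i j).det *
        (g n - ∑ i : Fin n, ∑ j : Fin n, b n i * (Matrix.of fun i j : Fin n => b i j)⁻¹ i j * g j) := by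
    rw [show (Matrix.of fun i j : Fin (n+1) => if (j:ℕ) < n then b i j else g i)
        = (Matrix.of fun i j : Fin (n+1) =>
            if (i:ℕ) < n then (if (j:ℕ) < n then b i j else g i)
            else (if (j:ℕ) < n then b n j else g n)) from ?_,
      det_border1 b (fun i => g i) (fun j => b n j) (g n) h0]
    ext i j
    have hi := i.isLt; have hj := j.isLt
    simp only [Matrix.of_apply]
    split_ifs with h h' h' <;> first
      | rfl
      | (congr 1 <;> omega)
  rw [s2, s1, s5, s6]
  linear_combination (-(Matrix.of fun i j : Fin n => b i j).det) * s37
    - ((Matrix.of fun i j : Fin n => b i j).det *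
        ∑ i : Fin n, ∑ j : Fin n, f i * (Matrix.of fun i j : Fin n => b i j)⁻¹ i j * g j) * s4

open Matrix in
lemma master (n : ℕ) (a : ℕ → ℕ → ℝ) (f g : ℕ → ℝ) :
    (∑ j : Fin (n+1), f j *
        ((Matrix.of fun i j : Fin (n+1) => a i j).updateCol j (fun i => g i)).det) *
      (Matrix.of fun i j : Fin n => a i j).det
    - (Matrix.of fun i j : Fin (n+1) => a i j).det *
      (∑ j : Fin n, f j *
        ((Matrix.of fun i j : Fin n => a i j).updateCol j (fun i => g i)).det)
    = (Matrix.of fun i j : Fin (n+1) => if (i:ℕ) < n then a i j else f j).det *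
      (Matrix.of fun i j : Fin (n+1) => if (j:ℕ) < n then a i j else g i).det := by
  classical
  set p : ℝ → ℕ → ℕ → ℝ := fun ε i j => a i j + (if i = j then ε else 0) with hp
  have hmat : ∀ (N : ℕ) (ε : ℝ), (Matrix.of fun i j : Fin N => p ε i j)
      = (Matrix.of fun i j : Fin N => a i j) + ε • (1 : Matrix (Fin N) (Fin N) ℝ) := by
    intro N ε
    ext i j
    by_cases h : i = j
    · subst h; simp [hp, Matrix.one_apply, Matrix.add_apply]
    · have : ¬ ((i:ℕ) = (j:ℕ)) := fun hc => h (Fin.ext hc)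
      simp [hp, Matrix.one_apply, Matrix.add_apply, this, h]
  have hcmat : ∀ (N : ℕ), Continuous fun ε : ℝ => (Matrix.of fun i j : Fin N => p ε i j) := by
    intro N
    apply continuous_matrix
    intro i j
    simp only [Matrix.of_apply, hp]
    by_cases h : (i:ℕ) = (j:ℕ)
    · simp only [h, if_pos]
      exact continuous_const.add continuous_id
    · simp only [h, if_neg, if_false]
      exact continuous_const.add continuous_const
  have hF : Continuous fun ε : ℝ =>
      (∑ j : Fin (n+1), f j *
          ((Matrix.of fun i j : Fin (n+1) => p ε i j).updateCol j (fun i => g i)).det) *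
        (Matrix.of fun i j : Fin n => p ε i j).det
      - (Matrix.of fun i j : Fin (n+1) => p ε i j).det *
        (∑ j : Fin n, f j *
          ((Matrix.of fun i j : Fin n => p ε i j).updateCol j (fun i => g i)).det) := by
    refine Continuous.sub (Continuous.mul ?_ (hcmat n).matrix_det)
      (Continuous.mul (hcmat (n+1)).matrix_det ?_)
    · exact continuous_finset_sum _ fun j _ => continuous_const.mul
        (((hcmat (n+1)).matrix_updateCol j continuous_const).matrix_det)
    · exact continuous_finset_sum _ fun j _ => continuous_const.mul
        (((hcmat n).matrix_updateCol j continuous_const).matrix_det)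
  have hG : Continuous fun ε : ℝ =>
      (Matrix.of fun i j : Fin (n+1) => if (i:ℕ) < n then p ε i j else f j).det *
      (Matrix.of fun i j : Fin (n+1) => if (j:ℕ) < n then p ε i j else g i).det := by
    refine Continuous.mul (Continuous.matrix_det ?_) (Continuous.matrix_det ?_) <;>
      · apply continuous_matrix
        intro i j
        simp only [Matrix.of_apply]
        split_ifs with h
        · by_cases h' : (i:ℕ) = (j:ℕ)
          · simp only [hp, h', if_pos]
            exact continuous_const.add continuous_id
          · simp only [hp, h', if_neg, if_false]
            exact continuous_const.add continuous_const
        · exact continuous_const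
  have hS : ({ε : ℝ | ((Matrix.of fun i j : Fin n => a i j) + ε • 1).det = 0}
      ∪ {ε : ℝ | ((Matrix.of fun i j : Fin (n+1) => a i j) + ε • 1).det = 0}).Finite :=
    (finite_bad _).union (finite_bad _)
  have key := perturb_eq hF hG hS (fun ε hε => by
    refine master_inv n (p ε) f g ?_ ?_
    · rw [hmat n ε]
      exact isUnit_iff_ne_zero.mpr fun hc => hε (Or.inl hc)
    · rw [hmat (n+1) ε]
      exact isUnit_iff_ne_zero.mpr fun hc => hε (Or.inr hc))
  have hp0 : p 0 = a := by
    funext i j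
    simp [hp]
  simpa only [hp0] using key


set_option maxHeartbeats 1000000 in
/-- The Hirota bilinear equation `D_t τ_{n+1}·τ_n = σ_n σ̂_n` for Gram determinants
with rank-one entry derivatives `∂_t m_{i,j} = φ̂_i φ_j`, `∂_t φ_j = φ_{j+1}`,
`∂_t φ̂_i = φ̂_{i+1}`. -/
theorem stmt12 (n : ℕ) (m : ℝ → ℕ → ℕ → ℝ) (φ φh : ℝ → ℕ → ℝ)
    (hm : ∀ (t : ℝ) (i j : ℕ), HasDerivAt (fun s => m s i j) (φh t i * φ t j) t)
    (hφ : ∀ (t : ℝ) (j : ℕ), HasDerivAt (fun s => φ s j) (φ t (j+1)) t)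
    (hφh : ∀ (t : ℝ) (i : ℕ), HasDerivAt (fun s => φh s i) (φh t (i+1)) t)
    (t : ℝ) :
    deriv (fun s => (Matrix.of fun i j : Fin (n+1) => m s i j).det) t *
        (Matrix.of fun i j : Fin n => m t i j).det -
      (Matrix.of fun i j : Fin (n+1) => m t i j).det *
        deriv (fun s => (Matrix.of fun i j : Fin n => m s i j).det) t =
    (Matrix.of fun i j : Fin (n+1) =>
        if (i:ℕ) < n then m t i j else φ t j).det *
    (Matrix.of fun i j : Fin (n+1) =>
        if (j:ℕ) < n then m t i j else φh t i).det := by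
  have hd1 : HasDerivAt (fun s => (Matrix.of fun i j : Fin (n+1) => m s i j).det)
      (∑ j : Fin (n+1), ((Matrix.of fun i j : Fin (n+1) => m t i j).updateCol j
        (fun i => (Matrix.of fun i j : Fin (n+1) => φh t i * φ t j) i j)).det) t :=
    hasDerivAt_det' (fun i j => hm t i j)
  have hd0 : HasDerivAt (fun s => (Matrix.of fun i j : Fin n => m s i j).det)
      (∑ j : Fin n, ((Matrix.of fun i j : Fin n => m t i j).updateCol j
        (fun i => (Matrix.of fun i j : Fin n => φh t i * φ t j) i j)).det) t :=
    hasDerivAt_det' (fun i j => hm t i j)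
  rw [hd1.deriv, hd0.deriv]
  have e1 : ∀ (N : ℕ) (j : Fin N),
      ((Matrix.of fun i j : Fin N => m t i j).updateCol j
        (fun i => φh t (i:ℕ) * φ t (j:ℕ))).det
      = φ t (j:ℕ) * ((Matrix.of fun i j : Fin N => m t i j).updateCol j
        (fun i => φh t (i:ℕ))).det := by
    intro N j
    rw [show (fun i : Fin N => φh t (i:ℕ) * φ t (j:ℕ))
        = (φ t (j:ℕ)) • (fun i : Fin N => φh t (i:ℕ)) from funext fun i => by
          simp [mul_comm], Matrix.det_updateCol_smul]
  simp only [Matrix.of_apply, e1]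
  exact master n (m t) (φ t) (φh t)
end

section
/- With the same setup (\partial_t m_{i,j} = \hat{\phi}_i \phi_j, \partial_t \phi_j = \phi_{j+1}, \partial_t \hat{\phi}_i = \hat{\phi}_{i+1}), define \xi_n = \det(m_{i,j}) over rows i \in \{0,\ldots,n-2,n\} and columns j \in \{0,\ldots,n-1\}, \tau_n = \det(m_{i,j})_{i,j=0}^{n-1}, \hat{\sigma}_n as the (n+1)\times(n+1) determinant with columns (m_{i,j})_{j=0..n-1} and last column \hat{\phi}_i for i = 0..n, and \sigma_{n-1} as the n\times n determinant with rows (m_{i,j})_{i=0..n-2} over columns j=0..n-1 and bottom row (\phi_0,\ldots,\phi_{n-1}). Then D_t \xi_n \cdot \tau_n = \hat{\sigma}_n \sigma_{n-1}. -/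
open Matrix Finset

lemma val_succAbove {N : ℕ} (p : Fin (N+1)) (i : Fin N) :
    ((p.succAbove i : Fin (N+1)) : ℕ) = if (i:ℕ) < (p:ℕ) then (i:ℕ) else (i:ℕ)+1 := by
  rcases lt_or_ge (Fin.castSucc i) p with h | h
  · rw [Fin.succAbove_of_castSucc_lt _ _ h, Fin.coe_castSucc, if_pos]
    exact h
  · rw [Fin.succAbove_of_le_castSucc _ _ h, Fin.val_succ, if_neg]
    simpa [Fin.le_def] using h

lemma det_col_single {N : ℕ} (A : Matrix (Fin (N+1)) (Fin (N+1)) ℝ) (r c : Fin (N+1)) (v : ℝ)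
    (h : ∀ i, A i c = if i = r then v else 0) :
    A.det = (-1)^((r:ℕ)+(c:ℕ)) * v * (A.submatrix r.succAbove c.succAbove).det := by
  rw [Matrix.det_succ_column A c]
  rw [Finset.sum_eq_single r]
  · rw [h r, if_pos rfl]
  · intro i _ hi
    rw [h i, if_neg hi, mul_zero, zero_mul]
  · intro hr; exact absurd (Finset.mem_univ r) hr

lemma bordered_det {N : ℕ} (T : Matrix (Fin N) (Fin N) ℝ) (u v : Fin N → ℝ)
    (Bd : Matrix (Fin (N+1)) (Fin (N+1)) ℝ)
    (hT : ∀ (i j : Fin N), Bd i.castSucc j.castSucc = T i j)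
    (hu : ∀ i : Fin N, Bd i.castSucc (Fin.last N) = u i)
    (hv : ∀ j : Fin N, Bd (Fin.last N) j.castSucc = v j)
    (h0 : Bd (Fin.last N) (Fin.last N) = 0) :
    Bd.det = -∑ i, u i * (T.updateRow i v).det := by
  cases N with
  | zero =>
    rw [Matrix.det_fin_one]
    rw [show (0 : Fin 1) = Fin.last 0 from rfl, h0]
    rw [Finset.univ_eq_empty, Finset.sum_empty, neg_zero]
  | succ mm =>
    rw [Matrix.det_succ_column Bd (Fin.last (mm+1)), Fin.sum_univ_castSucc]
    rw [h0, mul_zero, zero_mul, add_zero]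
    rw [← Finset.sum_neg_distrib]
    refine Finset.sum_congr rfl fun i0 _ => ?_
    have hlastAbove : (Fin.last (mm+1)).succAbove = Fin.castSucc := Fin.succAbove_last
    have hminor : (Bd.submatrix (Fin.castSucc i0).succAbove (Fin.last (mm+1)).succAbove).det
        = ∑ j : Fin (mm+1), (-1)^((mm:ℕ) + (j:ℕ)) * v j
            * (T.submatrix i0.succAbove j.succAbove).det := by
      rw [Matrix.det_succ_row _ (Fin.last mm)]
      refine Finset.sum_congr rfl fun j _ => ?_
      have hrow : (Fin.castSucc i0).succAbove (Fin.last mm) = Fin.last (mm+1) := by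
        apply Fin.ext
        rw [val_succAbove]
        have := i0.isLt
        simp only [Fin.coe_castSucc, Fin.val_last]
        split_ifs <;> omega
      have e1 : Bd.submatrix (Fin.castSucc i0).succAbove (Fin.last (mm+1)).succAbove
          (Fin.last mm) j = v j := by
        rw [Matrix.submatrix_apply, hlastAbove, hrow, hv]
      have hsub : (Bd.submatrix (Fin.castSucc i0).succAbove
            (Fin.last (mm+1)).succAbove).submatrix (Fin.last mm).succAbove j.succAbove
          = T.submatrix i0.succAbove j.succAbove := by
        ext a b
        simp only [Matrix.submatrix_apply]
        have h1 : (Fin.castSucc i0).succAbove ((Fin.last mm).succAbove a)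
            = Fin.castSucc (i0.succAbove a) := by
          apply Fin.ext
          have := a.isLt
          have := i0.isLt
          simp only [val_succAbove, Fin.coe_castSucc, Fin.val_last]
          split_ifs <;> omega
        have h2 : (Fin.last (mm+1)).succAbove (j.succAbove b) = Fin.castSucc (j.succAbove b) := by
          rw [hlastAbove]
        rw [h1, h2, hT]
      rw [e1, hsub, Fin.val_last]
    rw [hminor, Finset.mul_sum]
    have hupdate : (T.updateRow i0 v).det
        = ∑ j : Fin (mm+1), (-1)^((i0:ℕ)+(j:ℕ)) * v j
            * (T.submatrix i0.succAbove j.succAbove).det := by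
      rw [Matrix.det_succ_row _ i0]
      refine Finset.sum_congr rfl fun j _ => ?_
      rw [Matrix.updateRow_self, Matrix.submatrix_updateRow_succAbove]
    rw [hupdate, Finset.mul_sum, ← Finset.sum_neg_distrib]
    refine Finset.sum_congr rfl fun j _ => ?_
    rw [hu i0]
    have hsign : ((-1:ℝ))^(((Fin.castSucc i0 : Fin (mm+2)):ℕ) + ((Fin.last (mm+1)):ℕ))
        * ((-1)^((mm:ℕ)+(j:ℕ))) = -(-1)^((i0:ℕ)+(j:ℕ)) := by
      rw [← pow_add]
      simp only [Fin.coe_castSucc, Fin.val_last]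
      have hodd : Odd (((i0:ℕ) + (mm+1)) + ((mm:ℕ)+(j:ℕ)) - ((i0:ℕ)+(j:ℕ))) := ⟨mm, by omega⟩
      rw [show ((i0:ℕ) + (mm+1)) + ((mm:ℕ)+(j:ℕ))
          = ((i0:ℕ)+(j:ℕ)) + (((i0:ℕ) + (mm+1)) + ((mm:ℕ)+(j:ℕ)) - ((i0:ℕ)+(j:ℕ))) from by omega]
      rw [pow_add, hodd.neg_one_pow, mul_neg_one]
    calc (-1:ℝ)^(((Fin.castSucc i0 : Fin (mm+2)):ℕ) + ((Fin.last (mm+1)):ℕ)) * u i0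
          * ((-1)^((mm:ℕ)+(j:ℕ)) * v j * (T.submatrix i0.succAbove j.succAbove).det)
        = ((-1:ℝ)^(((Fin.castSucc i0 : Fin (mm+2)):ℕ) + ((Fin.last (mm+1)):ℕ)) * ((-1)^((mm:ℕ)+(j:ℕ))))
          * (u i0 * (v j * (T.submatrix i0.succAbove j.succAbove).det)) := by ring
      _ = -(u i0 * ((-1)^((i0:ℕ)+(j:ℕ)) * v j * (T.submatrix i0.succAbove j.succAbove).det)) := by
          rw [hsign]; ring

lemma det_hasDerivAt {N : ℕ} (A : ℝ → Matrix (Fin N) (Fin N) ℝ)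
    (A' : Matrix (Fin N) (Fin N) ℝ) (t : ℝ)
    (h : ∀ i j, HasDerivAt (fun s => A s i j) (A' i j) t) :
    HasDerivAt (fun s => (A s).det) (∑ i, ((A t).updateRow i (A' i)).det) t := by
  have hfun : (fun s => (A s).det)
      = fun s => ∑ σ : Equiv.Perm (Fin N), (Equiv.Perm.sign σ : ℝ) * ∏ i, A s (σ i) i := by
    funext s
    rw [Matrix.det_apply']
  rw [hfun]
  have H : HasDerivAt
      (fun s => ∑ σ : Equiv.Perm (Fin N), (Equiv.Perm.sign σ : ℝ) * ∏ i, A s (σ i) i)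
      (∑ σ : Equiv.Perm (Fin N), (Equiv.Perm.sign σ : ℝ)
        * ∑ i, (∏ j ∈ univ.erase i, A t (σ j) j) * A' (σ i) i) t := by
    apply HasDerivAt.fun_sum
    intro σ _
    have hp : HasDerivAt (fun s => ∏ i, A s (σ i) i)
        (∑ i, (∏ j ∈ univ.erase i, A t (σ j) j) • A' (σ i) i) t :=
      HasDerivAt.fun_finset_prod (fun i _ => h (σ i) i)
    simpa [smul_eq_mul] using (hp.const_mul ((Equiv.Perm.sign σ : ℝ)))
  convert H using 1
  calc ∑ i, ((A t).updateRow i (A' i)).det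
      = ∑ i, ∑ σ : Equiv.Perm (Fin N), (Equiv.Perm.sign σ : ℝ)
          * ∏ j, ((A t).updateRow i (A' i)) (σ j) j := by
        refine Finset.sum_congr rfl fun i _ => ?_
        rw [Matrix.det_apply']
    _ = ∑ σ : Equiv.Perm (Fin N), ∑ i, (Equiv.Perm.sign σ : ℝ)
          * ∏ j, ((A t).updateRow i (A' i)) (σ j) j := Finset.sum_comm
    _ = ∑ σ : Equiv.Perm (Fin N), (Equiv.Perm.sign σ : ℝ)
          * ∑ i, (∏ j ∈ univ.erase i, A t (σ j) j) * A' (σ i) i := by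
        refine Finset.sum_congr rfl fun σ _ => ?_
        rw [Finset.mul_sum]
        rw [← Equiv.sum_comp σ (fun i => (Equiv.Perm.sign σ : ℝ)
            * ∏ j, ((A t).updateRow i (A' i)) (σ j) j)]
        refine Finset.sum_congr rfl fun i0 _ => ?_
        have hprod : (∏ j, ((A t).updateRow (σ i0) (A' (σ i0))) (σ j) j)
            = A' (σ i0) i0 * ∏ j ∈ univ.erase i0, A t (σ j) j := by
          rw [← Finset.mul_prod_erase univ _ (Finset.mem_univ i0)]
          congr 1
          · rw [Matrix.updateRow_self]
          · refine Finset.prod_congr rfl fun j hj => ?_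
            rw [Matrix.updateRow_ne]
            exact fun hc => (Finset.mem_erase.mp hj).1 (σ.injective hc)
        rw [hprod]
        ring

variable {R : Type*} [CommRing R]

set_option maxHeartbeats 1600000 in
lemma dj_aux {k : ℕ} (A : Matrix (Fin (k+2)) (Fin (k+2)) R) :
    A.det * (A.det * (A.submatrix (fun i : Fin k => (⟨i, by omega⟩ : Fin (k+2)))
        (fun i : Fin k => (⟨i, by omega⟩ : Fin (k+2)))).det)
    = A.det * ((A.submatrix (Fin.succAbove ⟨k, by omega⟩) (Fin.succAbove ⟨k, by omega⟩)).det
        * (A.submatrix (Fin.succAbove ⟨k+1, by omega⟩) (Fin.succAbove ⟨k+1, by omega⟩)).det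
      - (A.submatrix (Fin.succAbove ⟨k, by omega⟩) (Fin.succAbove ⟨k+1, by omega⟩)).det
        * (A.submatrix (Fin.succAbove ⟨k+1, by omega⟩) (Fin.succAbove ⟨k, by omega⟩)).det) := by
  set p : Fin (k+2) := ⟨k, by omega⟩ with hp
  set q : Fin (k+2) := ⟨k+1, by omega⟩ with hq
  have hpq : p ≠ q := by simp [hp, hq, Fin.ext_iff]
  set B : Matrix (Fin (k+2)) (Fin (k+2)) R := Matrix.of fun i j =>
    if j = p then adjugate A i p else if j = q then adjugate A i q
    else if i = j then 1 else 0 with hB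
  set C : Matrix (Fin (k+2)) (Fin (k+2)) R := Matrix.of fun i j =>
    if j = p then (if i = p then A.det else 0)
    else if j = q then (if i = q then A.det else 0) else A i j with hC
  have hAB : A * B = C := by
    ext i j
    rw [Matrix.mul_apply]
    by_cases h1 : j = p
    · subst h1
      have := congrFun (congrFun (Matrix.mul_adjugate A) i) p
      rw [Matrix.mul_apply] at this
      simp only [hB, hC, Matrix.of_apply, if_pos rfl, Matrix.smul_apply,
        Matrix.one_apply, smul_eq_mul, if_true] at this ⊢
      rw [this]
      split_ifs <;> simp_all
    · by_cases h2 : j = q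
      · subst h2
        have := congrFun (congrFun (Matrix.mul_adjugate A) i) q
        rw [Matrix.mul_apply] at this
        simp only [hB, hC, Matrix.of_apply, if_pos rfl, if_neg h1, Matrix.smul_apply,
          Matrix.one_apply, smul_eq_mul, if_true] at this ⊢
        rw [this]
        split_ifs <;> simp_all
      · simp only [hB, hC, Matrix.of_apply, if_neg h1, if_neg h2]
        rw [Finset.sum_eq_single j]
        · rw [if_pos rfl, mul_one]
        · intro l _ hl
          rw [if_neg hl, mul_zero]
        · intro hj; exact absurd (Finset.mem_univ j) hj
  have hpv : (p : ℕ) = k := rfl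
  have hqv : (q : ℕ) = k+1 := rfl
  have h0 : (Fin.natAdd k (0 : Fin 2)) = p := by apply Fin.ext; simp [hpv]
  have h1 : (Fin.natAdd k (1 : Fin 2)) = q := by apply Fin.ext; simp [hqv]
  have hqp : q ≠ p := Ne.symm hpq
  -- det B
  have hBblocks : B.submatrix (finSumFinEquiv (m := k) (n := 2)) finSumFinEquiv
      = Matrix.fromBlocks 1
        (Matrix.of fun i j => B (Fin.castAdd 2 i) (Fin.natAdd k j)) 0
        !![adjugate A p p, adjugate A p q; adjugate A q p, adjugate A q q] := by
    ext i j
    rcases i with i | i <;> rcases j with j | j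
    · have hlt : (j : ℕ) < k := j.isLt
      simp only [Matrix.submatrix_apply, finSumFinEquiv_apply_left,
        Matrix.fromBlocks_apply₁₁, hB, Matrix.of_apply, Matrix.one_apply]
      rw [if_neg (by simp [Fin.ext_iff, hpv, Fin.coe_castAdd]; omega),
        if_neg (by simp [Fin.ext_iff, hqv, Fin.coe_castAdd]; omega)]
      simp [Fin.ext_iff, Fin.coe_castAdd]
    · simp only [Matrix.submatrix_apply, finSumFinEquiv_apply_left,
        finSumFinEquiv_apply_right, Matrix.fromBlocks_apply₁₂, Matrix.of_apply]
    · have hlt : (j : ℕ) < k := j.isLt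
      simp only [Matrix.submatrix_apply, finSumFinEquiv_apply_left,
        finSumFinEquiv_apply_right, Matrix.fromBlocks_apply₂₁, hB, Matrix.of_apply,
        Matrix.zero_apply]
      rw [if_neg (by simp [Fin.ext_iff, hpv, Fin.coe_castAdd]; omega),
        if_neg (by simp [Fin.ext_iff, hqv, Fin.coe_castAdd]; omega),
        if_neg (by simp [Fin.ext_iff, Fin.coe_castAdd, Fin.coe_natAdd]; omega)]
    · simp only [Matrix.submatrix_apply, finSumFinEquiv_apply_right,
        Matrix.fromBlocks_apply₂₂]
      fin_cases i <;> fin_cases j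
      · show B p p = A.adjugate p p
        rw [hB]; simp only [Matrix.of_apply, if_pos rfl, if_true]
      · show B p q = A.adjugate p q
        rw [hB]; simp only [Matrix.of_apply, if_neg hqp, if_pos rfl, if_true]
      · show B q p = A.adjugate q p
        rw [hB]; simp only [Matrix.of_apply, if_pos rfl, if_true]
      · show B q q = A.adjugate q q
        rw [hB]; simp only [Matrix.of_apply, if_neg hqp, if_pos rfl, if_true]
  have hdetB : B.det = adjugate A p p * adjugate A q q - adjugate A p q * adjugate A q p := by
    rw [← Matrix.det_submatrix_equiv_self (finSumFinEquiv (m := k) (n := 2)) B, hBblocks,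
      Matrix.det_fromBlocks_zero₂₁, Matrix.det_one, one_mul, Matrix.det_fin_two]
    simp
  -- det C
  have hCblocks : C.submatrix (finSumFinEquiv (m := k) (n := 2)) finSumFinEquiv
      = Matrix.fromBlocks
        (A.submatrix (fun i : Fin k => (⟨i, by omega⟩ : Fin (k+2)))
          (fun i : Fin k => (⟨i, by omega⟩ : Fin (k+2)))) 0
        (Matrix.of fun i j => C (Fin.natAdd k i) (Fin.castAdd 2 j))
        !![A.det, 0; 0, A.det] := by
    ext i j
    rcases i with i | i <;> rcases j with j | j
    · have hlt : (j : ℕ) < k := j.isLt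
      simp only [Matrix.submatrix_apply, finSumFinEquiv_apply_left,
        Matrix.fromBlocks_apply₁₁, hC, Matrix.of_apply]
      rw [if_neg (by simp [Fin.ext_iff, hpv, Fin.coe_castAdd]; omega),
        if_neg (by simp [Fin.ext_iff, hqv, Fin.coe_castAdd]; omega)]
      congr 1 <;> apply Fin.ext <;> simp [Fin.coe_castAdd]
    · have hlt : (i : ℕ) < k := i.isLt
      have hrowp : (Fin.castAdd 2 i) ≠ p := by
        simp only [Ne, Fin.ext_iff, hpv, Fin.coe_castAdd]; omega
      have hrowq : (Fin.castAdd 2 i) ≠ q := by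
        simp only [Ne, Fin.ext_iff, hqv, Fin.coe_castAdd]; omega
      have hcol : Fin.natAdd k j = p ∨ Fin.natAdd k j = q := by
        rcases j with ⟨jv, hj⟩
        interval_cases jv
        · left; apply Fin.ext; simp [hpv]
        · right; apply Fin.ext; simp [hqv]
      simp only [Matrix.submatrix_apply, finSumFinEquiv_apply_left,
        finSumFinEquiv_apply_right, Matrix.fromBlocks_apply₁₂, hC, Matrix.of_apply,
        Matrix.zero_apply]
      rcases hcol with h | h
      · rw [if_pos h, if_neg hrowp]
      · rw [h, if_neg hqp, if_pos rfl, if_neg hrowq]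
    · simp only [Matrix.submatrix_apply, finSumFinEquiv_apply_left,
        finSumFinEquiv_apply_right, Matrix.fromBlocks_apply₂₁, Matrix.of_apply]
    · simp only [Matrix.submatrix_apply, finSumFinEquiv_apply_right,
        Matrix.fromBlocks_apply₂₂]
      fin_cases i <;> fin_cases j
      · show C p p = A.det
        rw [hC]; simp only [Matrix.of_apply, if_pos rfl, if_true]
      · show C p q = 0
        rw [hC]; simp only [Matrix.of_apply, if_neg hqp, if_pos rfl, if_true]
        rw [if_neg hpq]
      · show C q p = 0
        rw [hC]; simp only [Matrix.of_apply, if_pos rfl, if_true]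
        rw [if_neg hqp]
      · show C q q = A.det
        rw [hC]; simp only [Matrix.of_apply, if_neg hqp, if_pos rfl, if_true]
  have hdetC : C.det = (A.submatrix (fun i : Fin k => (⟨i, by omega⟩ : Fin (k+2)))
      (fun i : Fin k => (⟨i, by omega⟩ : Fin (k+2)))).det * (A.det * A.det) := by
    have e1 := Matrix.det_submatrix_equiv_self (finSumFinEquiv (m := k) (n := 2)) C
    rw [hCblocks] at e1
    rw [Matrix.det_fromBlocks_zero₁₂] at e1
    rw [Matrix.det_fin_two] at e1
    rw [← e1]
    norm_num
  -- adjugate entries as minors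
  have hadj_pp : adjugate A p p
      = (A.submatrix (Fin.succAbove p) (Fin.succAbove p)).det := by
    rw [Matrix.adjugate_fin_succ_eq_det_submatrix]
    rw [show (((p:ℕ) + (p:ℕ))) = k + k from by rw [hpv]]
    rw [Even.neg_one_pow ⟨k, rfl⟩, one_mul]
  have hadj_qq : adjugate A q q
      = (A.submatrix (Fin.succAbove q) (Fin.succAbove q)).det := by
    rw [Matrix.adjugate_fin_succ_eq_det_submatrix]
    rw [show (((q:ℕ) + (q:ℕ))) = (k+1) + (k+1) from by rw [hqv]]
    rw [Even.neg_one_pow ⟨k+1, rfl⟩, one_mul]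
  have hadj_pq : adjugate A p q
      = -(A.submatrix (Fin.succAbove q) (Fin.succAbove p)).det := by
    rw [Matrix.adjugate_fin_succ_eq_det_submatrix]
    rw [show (((q:ℕ) + (p:ℕ))) = 2*k + 1 from by rw [hqv, hpv]; ring]
    rw [Odd.neg_one_pow ⟨k, rfl⟩, neg_one_mul]
  have hadj_qp : adjugate A q p
      = -(A.submatrix (Fin.succAbove p) (Fin.succAbove q)).det := by
    rw [Matrix.adjugate_fin_succ_eq_det_submatrix]
    rw [show (((p:ℕ) + (q:ℕ))) = 2*k + 1 from by rw [hqv, hpv]; ring]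
    rw [Odd.neg_one_pow ⟨k, rfl⟩, neg_one_mul]
  have hmain : A.det * B.det = C.det := by rw [← Matrix.det_mul, hAB]
  rw [hdetB, hadj_pp, hadj_qq, hadj_pq, hadj_qp] at hmain
  rw [hdetC] at hmain
  linear_combination -hmain

lemma dj {k : ℕ} (A : Matrix (Fin (k+2)) (Fin (k+2)) ℝ) :
    A.det * (A.submatrix (fun i : Fin k => (⟨i, by omega⟩ : Fin (k+2)))
        (fun i : Fin k => (⟨i, by omega⟩ : Fin (k+2)))).det
    = (A.submatrix (Fin.succAbove ⟨k, by omega⟩) (Fin.succAbove ⟨k, by omega⟩)).det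
        * (A.submatrix (Fin.succAbove ⟨k+1, by omega⟩) (Fin.succAbove ⟨k+1, by omega⟩)).det
      - (A.submatrix (Fin.succAbove ⟨k, by omega⟩) (Fin.succAbove ⟨k+1, by omega⟩)).det
        * (A.submatrix (Fin.succAbove ⟨k+1, by omega⟩) (Fin.succAbove ⟨k, by omega⟩)).det := by
  -- prove it for the generic matrix over a polynomial ring, then specialize
  let X : Matrix (Fin (k+2)) (Fin (k+2)) (MvPolynomial (Fin (k+2) × Fin (k+2)) ℝ) :=
    Matrix.of fun i j => MvPolynomial.X (i, j)
  have hXdet : X.det ≠ 0 := by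
    intro h
    have h2 := congrArg (MvPolynomial.eval (fun pq : Fin (k+2) × Fin (k+2) =>
      if pq.1 = pq.2 then (1:ℝ) else 0)) h
    rw [RingHom.map_det, RingHom.mapMatrix_apply, map_zero] at h2
    have h3 : (X.map (MvPolynomial.eval (fun pq : Fin (k+2) × Fin (k+2) =>
        if pq.1 = pq.2 then (1:ℝ) else 0))) = (1 : Matrix (Fin (k+2)) (Fin (k+2)) ℝ) := by
      ext i j
      simp [X, Matrix.one_apply]
    rw [h3, Matrix.det_one] at h2
    exact one_ne_zero h2
  have hgen := dj_aux X
  have hcancel := mul_left_cancel₀ hXdet hgen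
  have h4 := congrArg (MvPolynomial.eval (fun pq : Fin (k+2) × Fin (k+2) => A pq.1 pq.2)) hcancel
  have hmapX : X.map (MvPolynomial.eval (fun pq : Fin (k+2) × Fin (k+2) => A pq.1 pq.2)) = A := by
    ext i j
    simp [X]
  have hsub : ∀ (f g : Fin k → Fin (k+2)),
      (MvPolynomial.eval (fun pq : Fin (k+2) × Fin (k+2) => A pq.1 pq.2))
        ((X.submatrix f g).det) = (A.submatrix f g).det := by
    intro f g
    rw [RingHom.map_det]
    congr 1
    ext i j
    simp [X]
  have hsub' : ∀ (f g : Fin (k+1) → Fin (k+2)),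
      (MvPolynomial.eval (fun pq : Fin (k+2) × Fin (k+2) => A pq.1 pq.2))
        ((X.submatrix f g).det) = (A.submatrix f g).det := by
    intro f g
    rw [RingHom.map_det]
    congr 1
    ext i j
    simp [X]
  simp only [_root_.map_mul, map_sub] at h4
  rw [RingHom.map_det, RingHom.mapMatrix_apply, hmapX] at h4
  rw [hsub, hsub', hsub', hsub', hsub'] at h4
  exact h4

set_option maxHeartbeats 1600000 in
/-- The Hirota bilinear equation `D_t ξ_n·τ_n = σ̂_n σ_{n-1}` for the asymmetric
Cauchy–Toda Gram determinants, where `ξ_n` is the determinant with row index `n-1`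
replaced by `n`, `σ̂_n` is the determinant bordered by the column `φ̂`, and `σ_{n-1}`
is the determinant bordered by the bottom row `φ`. -/
theorem stmt13 (n : ℕ) (hn : 1 ≤ n) (m : ℝ → ℕ → ℕ → ℝ) (φ φh : ℝ → ℕ → ℝ)
    (hm : ∀ (t : ℝ) (i j : ℕ), HasDerivAt (fun s => m s i j) (φh t i * φ t j) t)
    (hφ : ∀ (t : ℝ) (j : ℕ), HasDerivAt (fun s => φ s j) (φ t (j+1)) t)
    (hφh : ∀ (t : ℝ) (i : ℕ), HasDerivAt (fun s => φh s i) (φh t (i+1)) t)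
    (t : ℝ) :
    deriv (fun s =>
        (Matrix.of fun i j : Fin n => m s (if (i:ℕ) = n - 1 then n else (i:ℕ)) j).det) t *
        (Matrix.of fun i j : Fin n => m t i j).det -
      (Matrix.of fun i j : Fin n => m t (if (i:ℕ) = n - 1 then n else (i:ℕ)) j).det *
        deriv (fun s => (Matrix.of fun i j : Fin n => m s i j).det) t =
    (Matrix.of fun i j : Fin (n+1) =>
        if (j:ℕ) < n then m t i j else φh t i).det *
    (Matrix.of fun i j : Fin n =>
        if (i:ℕ) < n - 1 then m t i j else φ t j).det := by
  set τmat : Matrix (Fin n) (Fin n) ℝ := Matrix.of fun i j : Fin n => m t i j with hτmat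
  set ξmat : Matrix (Fin n) (Fin n) ℝ :=
    Matrix.of fun i j : Fin n => m t (if (i:ℕ) = n - 1 then n else (i:ℕ)) j with hξmat
  set M : Matrix (Fin (n+2)) (Fin (n+2)) ℝ := Matrix.of fun i j =>
    if (i:ℕ) < n-1 then (if (j:ℕ) < n then m t i j else if (j:ℕ) = n then φh t i else 0)
    else if (i:ℕ) = n-1 then (if (j:ℕ) < n then φ t j else if (j:ℕ) = n then 0 else 1)
    else (if (j:ℕ) < n then m t ((i:ℕ)-1) j else if (j:ℕ) = n then φh t ((i:ℕ)-1) else 0)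
    with hM
  -- F0 : det M = σ̂ det
  have F0 : M.det = (Matrix.of fun i j : Fin (n+1) =>
      if (j:ℕ) < n then m t i j else φh t i).det := by
    have h := det_col_single M ⟨n-1, by omega⟩ ⟨n+1, by omega⟩ 1 ?_
    · rw [h]
      have : ((n-1) + (n+1)) = 2 * n := by omega
      rw [show (((⟨n-1, by omega⟩ : Fin (n+2)):ℕ) + ((⟨n+1, by omega⟩ : Fin (n+2)):ℕ)) = 2*n
        from by simp; omega]
      rw [pow_mul, neg_one_sq, one_pow, one_mul, one_mul]
      congr 1
      ext i j
      simp only [Matrix.submatrix_apply, hM, Matrix.of_apply, val_succAbove]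
      have hi := i.isLt
      have hj := j.isLt
      split_ifs <;> first | rfl | omega | (congr 1 <;> omega) | (exfalso; omega)
    · intro i
      have hi := i.isLt
      simp only [hM, Matrix.of_apply, Fin.ext_iff]
      split_ifs <;> first | rfl | omega | (exfalso; omega)
  -- F1 : top-left block is σ
  have F1 : M.submatrix (fun i : Fin n => (⟨i, by omega⟩ : Fin (n+2)))
      (fun i : Fin n => (⟨i, by omega⟩ : Fin (n+2)))
      = Matrix.of (fun i j : Fin n => if (i:ℕ) < n - 1 then m t i j else φ t j) := by
    ext i j
    have hi := i.isLt
    have hj := j.isLt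
    simp only [Matrix.submatrix_apply, hM, Matrix.of_apply]
    split_ifs <;> first | rfl | omega | (congr 1 <;> omega) | (exfalso; omega)
  -- F2 : minor (remove row n, col n) = - ξ det
  have F2 : (M.submatrix (Fin.succAbove ⟨n, by omega⟩) (Fin.succAbove ⟨n, by omega⟩)).det
      = -ξmat.det := by
    have h := det_col_single (M.submatrix (Fin.succAbove ⟨n, by omega⟩)
      (Fin.succAbove ⟨n, by omega⟩)) ⟨n-1, by omega⟩ ⟨n, by omega⟩ 1 ?_
    · rw [h]
      rw [show (((⟨n-1, by omega⟩ : Fin (n+1)):ℕ) + ((⟨n, by omega⟩ : Fin (n+1)):ℕ)) = 2*(n-1)+1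
        from by simp; omega]
      have hpow : ((-1:ℝ))^(2*(n-1)+1) = -1 := by
        rw [pow_succ, pow_mul, neg_one_sq, one_pow, one_mul]
      rw [hpow, mul_one, neg_one_mul, neg_inj]
      congr 1
      ext i j
      have hi := i.isLt
      have hj := j.isLt
      simp only [Matrix.submatrix_apply, hM, hξmat, Matrix.of_apply, val_succAbove]
      split_ifs <;> first | rfl | omega | (congr 1 <;> omega) | (exfalso; omega)
    · intro i
      have hi := i.isLt
      simp only [Matrix.submatrix_apply, hM, Matrix.of_apply, Fin.ext_iff, val_succAbove]
      split_ifs <;> first | rfl | omega | (exfalso; omega)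
  -- F5 : minor (remove row n+1, col n) = - τ det
  have F5 : (M.submatrix (Fin.succAbove ⟨n+1, by omega⟩) (Fin.succAbove ⟨n, by omega⟩)).det
      = -τmat.det := by
    have h := det_col_single (M.submatrix (Fin.succAbove ⟨n+1, by omega⟩)
      (Fin.succAbove ⟨n, by omega⟩)) ⟨n-1, by omega⟩ ⟨n, by omega⟩ 1 ?_
    · rw [h]
      rw [show (((⟨n-1, by omega⟩ : Fin (n+1)):ℕ) + ((⟨n, by omega⟩ : Fin (n+1)):ℕ)) = 2*(n-1)+1
        from by simp; omega]
      have hpow : ((-1:ℝ))^(2*(n-1)+1) = -1 := by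
        rw [pow_succ, pow_mul, neg_one_sq, one_pow, one_mul]
      rw [hpow, mul_one, neg_one_mul, neg_inj]
      congr 1
      ext i j
      have hi := i.isLt
      have hj := j.isLt
      simp only [Matrix.submatrix_apply, hM, hτmat, Matrix.of_apply, val_succAbove]
      split_ifs <;> first | rfl | omega | (congr 1 <;> omega) | (exfalso; omega)
    · intro i
      have hi := i.isLt
      simp only [Matrix.submatrix_apply, hM, Matrix.of_apply, Fin.ext_iff, val_succAbove]
      split_ifs <;> first | rfl | omega | (exfalso; omega)
  -- F3 : minor (remove row n+1, col n+1) = deriv of τ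
  set Bd3 : Matrix (Fin (n+1)) (Fin (n+1)) ℝ := Matrix.of fun i j =>
    if (i:ℕ) < n then (if (j:ℕ) < n then m t i j else φh t i)
    else (if (j:ℕ) < n then φ t j else 0) with hBd3
  have hperm3 : M.submatrix (Fin.succAbove ⟨n+1, by omega⟩) (Fin.succAbove ⟨n+1, by omega⟩)
      = Bd3.submatrix (Equiv.swap (⟨n-1, by omega⟩ : Fin (n+1)) ⟨n, by omega⟩) id := by
    ext i j
    have hi := i.isLt
    have hj := j.isLt
    by_cases h1 : i = (⟨n-1, by omega⟩ : Fin (n+1))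
    · rw [h1, Matrix.submatrix_apply, Matrix.submatrix_apply, Equiv.swap_apply_left]
      simp only [hM, hBd3, Matrix.of_apply, val_succAbove, id_eq]
      split_ifs <;> first | rfl | omega | (congr 1 <;> omega) | (exfalso; omega)
    · by_cases h2 : i = (⟨n, by omega⟩ : Fin (n+1))
      · rw [h2, Matrix.submatrix_apply, Matrix.submatrix_apply, Equiv.swap_apply_right]
        simp only [hM, hBd3, Matrix.of_apply, val_succAbove, id_eq]
        split_ifs <;> first | rfl | omega | (congr 1 <;> omega) | (exfalso; omega)
      · rw [Matrix.submatrix_apply, Matrix.submatrix_apply,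
          Equiv.swap_apply_of_ne_of_ne h1 h2]
        have h1' : (i:ℕ) ≠ n-1 := fun hc => h1 (Fin.ext hc)
        have h2' : (i:ℕ) ≠ n := fun hc => h2 (Fin.ext hc)
        simp only [hM, hBd3, Matrix.of_apply, val_succAbove, id_eq]
        split_ifs <;> first | rfl | omega | (congr 1 <;> omega) | (exfalso; omega)
  have hdet3 : (M.submatrix (Fin.succAbove ⟨n+1, by omega⟩)
      (Fin.succAbove ⟨n+1, by omega⟩)).det = -Bd3.det := by
    rw [hperm3, Matrix.det_permute,
      Equiv.Perm.sign_swap (by simp only [Ne, Fin.ext_iff]; omega)]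
    norm_num
  have hbord3 : Bd3.det = -∑ i : Fin n, φh t (i:ℕ) * (τmat.updateRow i (fun j : Fin n => φ t (j:ℕ))).det := by
    refine bordered_det τmat (fun i => φh t (i:ℕ)) (fun j => φ t (j:ℕ)) Bd3 ?_ ?_ ?_ ?_
    · intro i j
      have hi := i.isLt; have hj := j.isLt
      simp only [hBd3, hτmat, Matrix.of_apply, Fin.coe_castSucc]
      split_ifs <;> first | rfl | omega | (exfalso; omega)
    · intro i
      have hi := i.isLt
      simp only [hBd3, Matrix.of_apply, Fin.coe_castSucc, Fin.val_last]
      split_ifs <;> first | rfl | omega | (exfalso; omega)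
    · intro j
      have hj := j.isLt
      simp only [hBd3, Matrix.of_apply, Fin.coe_castSucc, Fin.val_last]
      split_ifs <;> first | rfl | omega | (exfalso; omega)
    · simp only [hBd3, Matrix.of_apply, Fin.val_last]
      split_ifs <;> first | rfl | omega | (exfalso; omega)
  have hder3 : HasDerivAt (fun s => (Matrix.of fun i j : Fin n => m s i j).det)
      (∑ i, (τmat.updateRow i ((Matrix.of fun i j : Fin n => φh t i * φ t j) i)).det) t :=
    det_hasDerivAt (fun s => Matrix.of fun i j : Fin n => m s i j)
      (Matrix.of fun i j : Fin n => φh t i * φ t j) t (fun i j => hm t i j)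
  have hval3 : deriv (fun s => (Matrix.of fun i j : Fin n => m s i j).det) t
      = ∑ i : Fin n, φh t (i:ℕ) * (τmat.updateRow i (fun j : Fin n => φ t (j:ℕ))).det := by
    rw [hder3.deriv]
    refine Finset.sum_congr rfl fun i _ => ?_
    rw [show ((Matrix.of fun i j : Fin n => φh t i * φ t j) i)
        = (φh t (i:ℕ)) • (fun j : Fin n => φ t (j:ℕ)) from rfl]
    rw [Matrix.det_updateRow_smul]
  have F3 : (M.submatrix (Fin.succAbove ⟨n+1, by omega⟩)
      (Fin.succAbove ⟨n+1, by omega⟩)).det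
      = deriv (fun s => (Matrix.of fun i j : Fin n => m s i j).det) t := by
    rw [hdet3, hbord3, neg_neg, hval3]
  -- F4 : minor (remove row n, col n+1) = deriv of ξ
  set Bd4 : Matrix (Fin (n+1)) (Fin (n+1)) ℝ := Matrix.of fun i j =>
    if (i:ℕ) < n then (if (j:ℕ) < n then m t (if (i:ℕ) = n-1 then n else (i:ℕ)) j
      else φh t (if (i:ℕ) = n-1 then n else (i:ℕ)))
    else (if (j:ℕ) < n then φ t j else 0) with hBd4
  have hperm4 : M.submatrix (Fin.succAbove ⟨n, by omega⟩) (Fin.succAbove ⟨n+1, by omega⟩)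
      = Bd4.submatrix (Equiv.swap (⟨n-1, by omega⟩ : Fin (n+1)) ⟨n, by omega⟩) id := by
    ext i j
    have hi := i.isLt
    have hj := j.isLt
    by_cases h1 : i = (⟨n-1, by omega⟩ : Fin (n+1))
    · rw [h1, Matrix.submatrix_apply, Matrix.submatrix_apply, Equiv.swap_apply_left]
      simp only [hM, hBd4, Matrix.of_apply, val_succAbove, id_eq]
      split_ifs <;> first | rfl | omega | (congr 1 <;> omega) | (exfalso; omega)
    · by_cases h2 : i = (⟨n, by omega⟩ : Fin (n+1))
      · rw [h2, Matrix.submatrix_apply, Matrix.submatrix_apply, Equiv.swap_apply_right]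
        simp only [hM, hBd4, Matrix.of_apply, val_succAbove, id_eq]
        split_ifs <;> first | rfl | omega | (congr 1 <;> omega) | (exfalso; omega)
      · rw [Matrix.submatrix_apply, Matrix.submatrix_apply,
          Equiv.swap_apply_of_ne_of_ne h1 h2]
        have h1' : (i:ℕ) ≠ n-1 := fun hc => h1 (Fin.ext hc)
        have h2' : (i:ℕ) ≠ n := fun hc => h2 (Fin.ext hc)
        simp only [hM, hBd4, Matrix.of_apply, val_succAbove, id_eq]
        split_ifs <;> first | rfl | omega | (congr 1 <;> omega) | (exfalso; omega)
  have hdet4 : (M.submatrix (Fin.succAbove ⟨n, by omega⟩)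
      (Fin.succAbove ⟨n+1, by omega⟩)).det = -Bd4.det := by
    rw [hperm4, Matrix.det_permute,
      Equiv.Perm.sign_swap (by simp only [Ne, Fin.ext_iff]; omega)]
    norm_num
  have hbord4 : Bd4.det = -∑ i : Fin n, φh t (if (i:ℕ) = n-1 then n else (i:ℕ))
      * (ξmat.updateRow i (fun j : Fin n => φ t (j:ℕ))).det := by
    refine bordered_det ξmat (fun i => φh t (if (i:ℕ) = n-1 then n else (i:ℕ)))
      (fun j => φ t (j:ℕ)) Bd4 ?_ ?_ ?_ ?_
    · intro i j
      have hi := i.isLt; have hj := j.isLt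
      simp only [hBd4, hξmat, Matrix.of_apply, Fin.coe_castSucc]
      split_ifs <;> first | rfl | omega | (exfalso; omega)
    · intro i
      have hi := i.isLt
      simp only [hBd4, Matrix.of_apply, Fin.coe_castSucc, Fin.val_last]
      split_ifs <;> first | rfl | omega | (exfalso; omega)
    · intro j
      have hj := j.isLt
      simp only [hBd4, Matrix.of_apply, Fin.coe_castSucc, Fin.val_last]
      split_ifs <;> first | rfl | omega | (exfalso; omega)
    · simp only [hBd4, Matrix.of_apply, Fin.val_last]
      split_ifs <;> first | rfl | omega | (exfalso; omega)
  have hder4 : HasDerivAt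
      (fun s => (Matrix.of fun i j : Fin n => m s (if (i:ℕ) = n - 1 then n else (i:ℕ)) j).det)
      (∑ i, (ξmat.updateRow i ((Matrix.of fun i j : Fin n =>
        φh t (if (i:ℕ) = n - 1 then n else (i:ℕ)) * φ t j) i)).det) t :=
    det_hasDerivAt
      (fun s => Matrix.of fun i j : Fin n => m s (if (i:ℕ) = n - 1 then n else (i:ℕ)) j)
      (Matrix.of fun i j : Fin n => φh t (if (i:ℕ) = n - 1 then n else (i:ℕ)) * φ t j) t
      (fun i j => hm t _ j)
  have hval4 : deriv
      (fun s => (Matrix.of fun i j : Fin n => m s (if (i:ℕ) = n - 1 then n else (i:ℕ)) j).det) t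
      = ∑ i : Fin n, φh t (if (i:ℕ) = n-1 then n else (i:ℕ))
        * (ξmat.updateRow i (fun j : Fin n => φ t (j:ℕ))).det := by
    rw [hder4.deriv]
    refine Finset.sum_congr rfl fun i _ => ?_
    rw [show ((Matrix.of fun i j : Fin n => φh t (if (i:ℕ) = n - 1 then n else (i:ℕ)) * φ t j) i)
        = (φh t (if (i:ℕ) = n-1 then n else (i:ℕ))) • (fun j : Fin n => φ t (j:ℕ)) from rfl]
    rw [Matrix.det_updateRow_smul]
  have F4 : (M.submatrix (Fin.succAbove ⟨n, by omega⟩)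
      (Fin.succAbove ⟨n+1, by omega⟩)).det
      = deriv (fun s =>
          (Matrix.of fun i j : Fin n => m s (if (i:ℕ) = n - 1 then n else (i:ℕ)) j).det) t := by
    rw [hdet4, hbord4, neg_neg, hval4]
  -- combine via Desnanot–Jacobi
  have HDJ := dj (k := n) M
  rw [F0, F1, F2, F5, F3, F4] at HDJ
  linear_combination -HDJ
end

section
/- Let m_{i,j} = \int\int x^i y^j/(x+y) d\mu_1(x) d\mu_2(y) and \phi_j = \int y^j d\mu_2(y) for non-negative measures on \mathbb{R}_+ with all moments finite. Then the (n+1)\times(n+1) determinant \sigma_n = \det\begin{pmatrix} (m_{i,j})_{i=0..n-1, j=0..n} \\ (\phi_j)_{j=0..n} \end{pmatrix} equals \frac{1}{n!(n+1)!} \int_{\mathbb{R}_+^n \times \mathbb{R}_+^{n+1}} \frac{\Delta_n^2(x) \Delta_{n+1}^2(y)}{\prod_{j=1}^n \prod_{k=1}^{n+1} (x_j + y_k)} \prod_{j=1}^n d\mu_1(x_j) \prod_{k=1}^{n+1} d\mu_2(y_k). -/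
open MeasureTheory

open Finset Matrix Polynomial

/-- abbreviation for the Vandermonde product -/
noncomputable def vdp {n : ℕ} (v : Fin n → ℝ) : ℝ :=
  ∏ j : Fin n, ∏ k ∈ Finset.Ioi j, (v k - v j)

lemma vdp_eq_det_vandermonde {n : ℕ} (v : Fin n → ℝ) :
    vdp v = (Matrix.vandermonde v).det := (Matrix.det_vandermonde v).symm

lemma vdp_eq_zero {n : ℕ} {v : Fin n → ℝ} {a b : Fin n} (hab : a ≠ b) (hv : v a = v b) :
    vdp v = 0 := by
  rcases lt_or_gt_of_ne hab with h | h
  · exact Finset.prod_eq_zero (Finset.mem_univ a)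
      (Finset.prod_eq_zero (Finset.mem_Ioi.2 h) (by rw [hv, sub_self]))
  · exact Finset.prod_eq_zero (Finset.mem_univ b)
      (Finset.prod_eq_zero (Finset.mem_Ioi.2 h) (by rw [hv, sub_self]))

lemma vdp_ne_zero {n : ℕ} {v : Fin n → ℝ} (hv : Function.Injective v) :
    vdp v ≠ 0 := by
  rw [vdp, Finset.prod_ne_zero_iff]
  intro j _
  rw [Finset.prod_ne_zero_iff]
  intro k hk
  exact sub_ne_zero.2 fun h => (Finset.mem_Ioi.1 hk).ne' (hv h) |>.elim

/-- the polynomial `∏_{k' ≠ k} (X + C (y k'))` -/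
noncomputable def qpoly {n : ℕ} (y : Fin n → ℝ) (k : Fin n) : Polynomial ℝ :=
  ∏ k' ∈ Finset.univ.erase k, (X + C (y k'))

lemma qpoly_monic {n : ℕ} (y : Fin n → ℝ) (k : Fin n) : (qpoly y k).Monic :=
  monic_prod_of_monic _ _ fun i _ => monic_X_add_C (y i)

lemma qpoly_natDegree {n : ℕ} (y : Fin (n+1) → ℝ) (k : Fin (n+1)) :
    (qpoly y k).natDegree = n := by
  rw [qpoly, natDegree_prod_of_monic _ _ fun i _ => monic_X_add_C (y i)]
  simp [Finset.card_erase_of_mem]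

/-- the coefficient matrix -/
noncomputable def coeffMat (n : ℕ) (y : Fin n → ℝ) : Matrix (Fin n) (Fin n) ℝ :=
  Matrix.of fun i k => (qpoly y k).coeff i

lemma qpoly_eq_of_eq {n : ℕ} (y : Fin n → ℝ) {k k' : Fin n} (hkk' : k ≠ k')
    (h : y k = y k') : qpoly y k = qpoly y k' := by
  have h1 : k' ∈ Finset.univ.erase k := Finset.mem_erase.2 ⟨hkk'.symm, Finset.mem_univ _⟩
  have h2 : k ∈ Finset.univ.erase k' := Finset.mem_erase.2 ⟨hkk', Finset.mem_univ _⟩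
  rw [qpoly, ← Finset.mul_prod_erase _ _ h1, qpoly, ← Finset.mul_prod_erase _ _ h2,
    Finset.erase_right_comm, h]

lemma qpoly_eval {n : ℕ} (y : Fin n → ℝ) (k : Fin n) (t : ℝ) :
    (qpoly y k).eval t = ∏ k' ∈ Finset.univ.erase k, (t + y k') := by
  simp [qpoly, eval_prod]

lemma det_coeffMat (n : ℕ) (y : Fin n → ℝ) : (coeffMat n y).det = vdp y := by
  cases n with
  | zero => simp [Matrix.det_isEmpty, vdp]
  | succ m =>
    by_cases hinj : Function.Injective y
    · -- injective case
      set V : Matrix (Fin (m+1)) (Fin (m+1)) ℝ := Matrix.vandermonde (fun l => -(y l)) with hV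
      have hdiag : V * coeffMat (m+1) y =
          Matrix.diagonal (fun l => ∏ k' ∈ Finset.univ.erase l, (y k' - y l)) := by
        ext l k
        rw [Matrix.mul_apply]
        have : ∀ j : Fin (m+1), V l j * coeffMat (m+1) y j k
            = (qpoly y k).coeff j * (-(y l)) ^ (j : ℕ) := by
          intro j; rw [mul_comm]; rfl
        rw [Finset.sum_congr rfl fun j _ => this j,
          Fin.sum_univ_eq_sum_range (fun j => (qpoly y k).coeff j * (-(y l)) ^ j) (m+1),
          ← eval_eq_sum_range' (by rw [qpoly_natDegree] ; omega) (-(y l)), qpoly_eval]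
        have hprod : ∏ k' ∈ Finset.univ.erase k, (-(y l) + y k')
            = ∏ k' ∈ Finset.univ.erase k, (y k' - y l) := by
          exact Finset.prod_congr rfl fun k' _ => by ring
        rw [hprod]
        by_cases hlk : l = k
        · subst hlk; rw [Matrix.diagonal_apply_eq]
        · rw [Matrix.diagonal_apply_ne _ hlk]
          exact Finset.prod_eq_zero (Finset.mem_erase.2 ⟨hlk, Finset.mem_univ _⟩)
            (by rw [sub_self])
      have hdet := congrArg Matrix.det hdiag
      rw [Matrix.det_mul, Matrix.det_diagonal] at hdet
      -- identify det V
      have hdV : V.det = ∏ j : Fin (m+1), ∏ k ∈ Finset.Ioi j, (y j - y k) := by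
        rw [hV, Matrix.det_vandermonde]
        exact Finset.prod_congr rfl fun j _ => Finset.prod_congr rfl fun k _ => by ring
      have hsplit : (∏ l : Fin (m+1), ∏ k' ∈ Finset.univ.erase l, (y k' - y l))
          = vdp y * ∏ j : Fin (m+1), ∏ k ∈ Finset.Ioi j, (y j - y k) := by
        have herase : ∀ l : Fin (m+1), Finset.univ.erase l = Finset.Ioi l ∪ Finset.Iio l := by
          intro l; ext a
          simp only [Finset.mem_erase, Finset.mem_univ, and_true, Finset.mem_union,
            Finset.mem_Ioi, Finset.mem_Iio]
          exact ⟨fun h => (Ne.lt_or_gt h).symm, fun h => h.elim (fun h => h.ne') fun h => h.ne⟩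
        have hdisj : ∀ l : Fin (m+1), Disjoint (Finset.Ioi l) (Finset.Iio l) := by
          intro l
          exact Finset.disjoint_left.2 fun a ha ha' =>
            absurd ((Finset.mem_Iio.1 ha').trans (Finset.mem_Ioi.1 ha)) (lt_irrefl _)
        calc (∏ l : Fin (m+1), ∏ k' ∈ Finset.univ.erase l, (y k' - y l))
            = ∏ l : Fin (m+1), ((∏ k' ∈ Finset.Ioi l, (y k' - y l)) *
              ∏ k' ∈ Finset.Iio l, (y k' - y l)) := by
              exact Finset.prod_congr rfl fun l _ => by
                rw [herase l, Finset.prod_union (hdisj l)]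
          _ = vdp y * ∏ l : Fin (m+1), ∏ k' ∈ Finset.Iio l, (y k' - y l) := by
              rw [Finset.prod_mul_distrib]; rfl
          _ = vdp y * ∏ j : Fin (m+1), ∏ k ∈ Finset.Ioi j, (y j - y k) := by
              congr 1
              rw [Finset.prod_comm' (t' := Finset.univ) (s' := fun k' => Finset.Ioi k')]
              intro a b
              simp [Finset.mem_Ioi, Finset.mem_Iio, and_comm]
      have hP : (∏ j : Fin (m+1), ∏ k ∈ Finset.Ioi j, (y j - y k)) ≠ 0 := by
        rw [Finset.prod_ne_zero_iff]
        intro j _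
        rw [Finset.prod_ne_zero_iff]
        intro k hk
        exact sub_ne_zero.2 fun h => (Finset.mem_Ioi.1 hk).ne (hinj h) |>.elim
      rw [hdV, hsplit] at hdet
      have := mul_left_cancel₀ hP (by linarith [hdet] : (∏ j : Fin (m+1), ∏ k ∈ Finset.Ioi j, (y j - y k)) * (coeffMat (m+1) y).det = (∏ j : Fin (m+1), ∏ k ∈ Finset.Ioi j, (y j - y k)) * vdp y)
      exact this
    · -- non-injective
      rw [Function.not_injective_iff] at hinj
      obtain ⟨a, b, hab, hne⟩ := hinj
      rw [vdp_eq_zero hne hab]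
      exact Matrix.det_zero_of_column_eq hne (fun i => by
        show (qpoly y a).coeff i = (qpoly y b).coeff i
        rw [qpoly_eq_of_eq y hne hab])

/-- bordered Vandermonde: rows of powers of `x i` for `i < n`, last row `(0,…,0,1)`. -/
lemma det_borderedVandermonde (n : ℕ) (x : Fin n → ℝ) :
    (Matrix.of fun i j : Fin (n+1) => if h : (i : ℕ) < n then x ⟨i, h⟩ ^ (j : ℕ)
      else (if j = Fin.last n then 1 else 0)).det = vdp x := by
  rw [Matrix.det_succ_row _ (Fin.last n)]
  have hlast : ¬ ((Fin.last n : Fin (n+1)) : ℕ) < n := by simp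
  rw [Finset.sum_eq_single (Fin.last n)]
  · simp only [Matrix.of_apply, dif_neg hlast, if_pos rfl, mul_one]
    have h1 : ((-1 : ℝ)) ^ ((Fin.last n : Fin (n+1)) + (Fin.last n : Fin (n+1)) : ℕ) = 1 := by
      simp [Fin.val_last, pow_add, ← mul_pow]
    rw [h1, one_mul]
    have h2 : ((Matrix.of fun i j : Fin (n+1) => if h : (i : ℕ) < n then x ⟨i, h⟩ ^ (j : ℕ)
        else (if j = Fin.last n then 1 else 0)).submatrix (Fin.last n).succAbove
          (Fin.last n).succAbove) = Matrix.vandermonde x := by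
      ext a b
      have ha : ((Fin.last n).succAbove a : ℕ) < n := by
        rw [Fin.succAbove_last]; exact a.isLt
      simp only [Matrix.submatrix_apply, Matrix.of_apply, dif_pos ha, Matrix.vandermonde]
      have : (⟨((Fin.last n).succAbove a : ℕ), ha⟩ : Fin n) = a := by
        ext; simp [Fin.succAbove_last]
      rw [this]
      simp [Fin.succAbove_last]
    rw [h2, Matrix.det_vandermonde]; simp [vdp]
  · intro j _ hj
    simp [Matrix.of_apply, dif_neg hlast, if_neg hj]
  · intro h; exact absurd (Finset.mem_univ _) h

/-- bordered Cauchy determinant -/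
lemma det_borderedCauchy (n : ℕ) (x : Fin n → ℝ) (y : Fin (n+1) → ℝ)
    (hxy : ∀ j k, x j + y k ≠ 0) :
    (Matrix.of fun i k : Fin (n+1) =>
        if h : (i : ℕ) < n then (x ⟨i, h⟩ + y k)⁻¹ else 1).det
      = vdp x * vdp y / ∏ j : Fin n, ∏ k : Fin (n+1), (x j + y k) := by
  classical
  set c : Fin (n+1) → ℝ := fun i =>
    if h : (i : ℕ) < n then (∏ k' : Fin (n+1), (x ⟨i, h⟩ + y k'))⁻¹ else 1 with hc
  set B' : Matrix (Fin (n+1)) (Fin (n+1)) ℝ := Matrix.of fun i k =>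
    if h : (i : ℕ) < n then ∏ k' ∈ Finset.univ.erase k, (x ⟨i, h⟩ + y k') else 1 with hB'
  have hBentry : (Matrix.of fun i k : Fin (n+1) =>
      if h : (i : ℕ) < n then (x ⟨i, h⟩ + y k)⁻¹ else 1)
      = Matrix.of fun i k => c i * B' i k := by
    ext i k
    simp only [Matrix.of_apply, hc, hB']
    by_cases h : (i : ℕ) < n
    · rw [dif_pos h, dif_pos h, dif_pos h]
      have hfac : (∏ k' : Fin (n+1), (x ⟨i, h⟩ + y k'))
          = (x ⟨i, h⟩ + y k) * ∏ k' ∈ Finset.univ.erase k, (x ⟨i, h⟩ + y k') :=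
        (Finset.mul_prod_erase _ _ (Finset.mem_univ k)).symm
      have hne : (∏ k' ∈ Finset.univ.erase k, (x ⟨i, h⟩ + y k')) ≠ 0 :=
        Finset.prod_ne_zero_iff.2 fun k' _ => hxy _ _
      rw [hfac, mul_inv, mul_assoc, inv_mul_cancel₀ hne, mul_one]
    · rw [dif_neg h, dif_neg h, dif_neg h, one_mul]
  have hB'fact : B' = (Matrix.of fun i j : Fin (n+1) => if h : (i : ℕ) < n then x ⟨i, h⟩ ^ (j : ℕ)
      else (if j = Fin.last n then 1 else 0)) * coeffMat (n+1) y := by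
    ext i k
    rw [Matrix.mul_apply]
    by_cases h : (i : ℕ) < n
    · simp only [hB', Matrix.of_apply, dif_pos h]
      have : ∀ j : Fin (n+1), x ⟨i, h⟩ ^ (j : ℕ) * coeffMat (n+1) y j k
          = (qpoly y k).coeff j * x ⟨i, h⟩ ^ (j : ℕ) := by
        intro j; rw [mul_comm]; rfl
      rw [Finset.sum_congr rfl fun j _ => this j,
        Fin.sum_univ_eq_sum_range (fun j => (qpoly y k).coeff j * x ⟨i, h⟩ ^ j) (n+1),
        ← eval_eq_sum_range' (by rw [qpoly_natDegree]; exact Nat.lt_succ_self n) (x ⟨i, h⟩), qpoly_eval]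
    · simp only [hB', Matrix.of_apply, dif_neg h]
      have : ∀ j : Fin (n+1), (if j = Fin.last n then (1:ℝ) else 0)
            * coeffMat (n+1) y j k = if j = Fin.last n then (qpoly y k).coeff j else 0 := by
        intro j
        by_cases hj : j = Fin.last n
        · rw [if_pos hj, if_pos hj, one_mul]; rfl
        · rw [if_neg hj, if_neg hj, zero_mul]
      rw [Finset.sum_congr rfl fun j _ => this j, Finset.sum_ite_eq' _ (Fin.last n)]
      simp only [Finset.mem_univ, if_pos]
      have hcoe : ((Fin.last n : Fin (n+1)) : ℕ) = (qpoly y k).natDegree := by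
        rw [qpoly_natDegree]; rfl
      rw [hcoe, (qpoly_monic y k).coeff_natDegree]
  have hdetB' : B'.det = vdp x * vdp y := by
    rw [hB'fact, Matrix.det_mul, det_borderedVandermonde, det_coeffMat]
  rw [hBentry, Matrix.det_mul_column, hdetB']
  have hcprod : (∏ i : Fin (n+1), c i)
      = (∏ j : Fin n, ∏ k : Fin (n+1), (x j + y k))⁻¹ := by
    rw [Fin.prod_univ_castSucc]
    have hlast : ¬ ((Fin.last n : Fin (n+1)) : ℕ) < n := by simp
    rw [hc]
    simp only [dif_neg hlast, mul_one]
    rw [← Finset.prod_inv_distrib]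
    refine Finset.prod_congr rfl fun i _ => ?_
    have h : ((Fin.castSucc i : Fin (n+1)) : ℕ) < n := i.isLt
    rw [dif_pos h]
    have : (⟨(i.castSucc : ℕ), h⟩ : Fin n) = i := by ext; simp
    rw [this]
  rw [hcprod, div_eq_mul_inv]
  ring

/-- determinant of the sample matrix -/
noncomputable def Fdet {n : ℕ} (x : Fin n → ℝ) (y : Fin (n+1) → ℝ) : ℝ :=
  (Matrix.of fun i k : Fin (n+1) =>
    if h : (i : ℕ) < n then x ⟨i, h⟩ ^ (i : ℕ) * y i ^ (k : ℕ) / (x ⟨i, h⟩ + y i)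
    else y i ^ (k : ℕ)).det

noncomputable def bmat {n : ℕ} (x : Fin n → ℝ) (y : Fin (n+1) → ℝ) (τ : Equiv.Perm (Fin n)) :
    Matrix (Fin (n+1)) (Fin (n+1)) ℝ :=
  Matrix.of fun i k => if h : (i : ℕ) < n then (x (τ ⟨i, h⟩) + y k)⁻¹ else 1

lemma Fdet_perm {n : ℕ} (x : Fin n → ℝ) (y : Fin (n+1) → ℝ) (τ : Equiv.Perm (Fin n))
    (σ : Equiv.Perm (Fin (n+1))) :
    Fdet (x ∘ τ) (y ∘ σ) = ((∏ i : Fin n, x (τ i) ^ (i : ℕ)) *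
        ∏ i : Fin (n+1), bmat x y τ i (σ i)) *
      (((Equiv.Perm.sign σ : ℤ) : ℝ) * vdp y) := by
  have hentry : (Matrix.of fun i k : Fin (n+1) =>
      if h : (i : ℕ) < n then (x ∘ τ) ⟨i, h⟩ ^ (i : ℕ) * (y ∘ σ) i ^ (k : ℕ)
        / ((x ∘ τ) ⟨i, h⟩ + (y ∘ σ) i) else (y ∘ σ) i ^ (k : ℕ))
      = Matrix.of fun i k =>
        (fun i : Fin (n+1) => if h : (i : ℕ) < n then x (τ ⟨i, h⟩) ^ (i : ℕ) * (x (τ ⟨i, h⟩) + y (σ i))⁻¹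
          else 1) i * ((Matrix.vandermonde y).submatrix σ id) i k := by
    ext i k
    simp only [Matrix.of_apply, Function.comp_apply, Matrix.submatrix_apply, Matrix.vandermonde,
      id_eq]
    by_cases h : (i : ℕ) < n
    · rw [dif_pos h, dif_pos h, div_eq_mul_inv]
      show x (τ ⟨i, h⟩) ^ (i:ℕ) * y (σ i) ^ (k:ℕ) * (x (τ ⟨i, h⟩) + y (σ i))⁻¹ = _
      ring
    · rw [dif_neg h, dif_neg h, one_mul]
  rw [Fdet, hentry, Matrix.det_mul_column, Matrix.det_permute, ← vdp_eq_det_vandermonde]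
  have hsplit : ∀ i : Fin (n+1),
      (if h : (i : ℕ) < n then x (τ ⟨i, h⟩) ^ (i : ℕ) * (x (τ ⟨i, h⟩) + y (σ i))⁻¹ else 1)
      = (if h : (i : ℕ) < n then x (τ ⟨i, h⟩) ^ (i : ℕ) else 1) * bmat x y τ i (σ i) := by
    intro i
    by_cases h : (i : ℕ) < n
    · rw [dif_pos h, dif_pos h]; show _ = _ * dite _ _ _; rw [dif_pos h]
    · rw [dif_neg h, dif_neg h]; show _ = _ * dite _ _ _; rw [dif_neg h, one_mul]
  rw [Finset.prod_congr rfl fun i _ => hsplit i, Finset.prod_mul_distrib]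
  have hN : (∏ i : Fin (n+1), (if h : (i : ℕ) < n then x (τ ⟨i, h⟩) ^ (i : ℕ) else 1))
      = ∏ i : Fin n, x (τ i) ^ (i : ℕ) := by
    rw [Fin.prod_univ_castSucc]
    have hlast : ¬ ((Fin.last n : Fin (n+1)) : ℕ) < n := by simp
    rw [dif_neg hlast, mul_one]
    refine Finset.prod_congr rfl fun i _ => ?_
    have h : ((Fin.castSucc i : Fin (n+1)) : ℕ) < n := i.isLt
    rw [dif_pos h]
    have : (⟨(i.castSucc : ℕ), h⟩ : Fin n) = i := by ext; simp
    rw [this, Fin.coe_castSucc]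
  rw [hN]

lemma Fdet_sum_sigma {n : ℕ} (x : Fin n → ℝ) (y : Fin (n+1) → ℝ)
    (hxy : ∀ j k, x j + y k ≠ 0) (τ : Equiv.Perm (Fin n)) :
    ∑ σ : Equiv.Perm (Fin (n+1)), Fdet (x ∘ τ) (y ∘ σ)
      = (((Equiv.Perm.sign τ : ℤ) : ℝ) * ∏ i : Fin n, x (τ i) ^ (i : ℕ)) *
        (vdp x * vdp y ^ 2 / ∏ j : Fin n, ∏ k : Fin (n+1), (x j + y k)) := by
  have hdet : (bmat x y τ).det = (((Equiv.Perm.sign τ : ℤ) : ℝ) * vdp x) * vdp y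
      / ∏ j : Fin n, ∏ k : Fin (n+1), (x j + y k) := by
    have h1 : (bmat x y τ).det
        = vdp (x ∘ τ) * vdp y / ∏ j : Fin n, ∏ k : Fin (n+1), ((x ∘ τ) j + y k) :=
      det_borderedCauchy n (x ∘ τ) y (fun j k => hxy (τ j) k)
    have h2 : (∏ j : Fin n, ∏ k : Fin (n+1), ((x ∘ τ) j + y k))
        = ∏ j : Fin n, ∏ k : Fin (n+1), (x j + y k) :=
      Equiv.prod_comp τ (fun j => ∏ k : Fin (n+1), (x j + y k))
    have h3 : vdp (x ∘ τ) = ((Equiv.Perm.sign τ : ℤ) : ℝ) * vdp x := by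
      rw [vdp_eq_det_vandermonde, vdp_eq_det_vandermonde]
      have h4 : Matrix.vandermonde (x ∘ τ) = (Matrix.vandermonde x).submatrix τ id := rfl
      rw [h4, Matrix.det_permute]
    rw [h1, h2, h3]
  have hsum : ∑ σ : Equiv.Perm (Fin (n+1)),
      ((Equiv.Perm.sign σ : ℤ) : ℝ) * ∏ i : Fin (n+1), bmat x y τ i (σ i)
        = (bmat x y τ).det := by
    rw [← Matrix.det_transpose, Matrix.det_apply']
    exact Finset.sum_congr rfl fun σ _ => rfl
  calc ∑ σ : Equiv.Perm (Fin (n+1)), Fdet (x ∘ τ) (y ∘ σ)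
      = ∑ σ : Equiv.Perm (Fin (n+1)),
        (((Equiv.Perm.sign σ : ℤ) : ℝ) * ∏ i : Fin (n+1), bmat x y τ i (σ i)) *
          ((∏ i : Fin n, x (τ i) ^ (i : ℕ)) * vdp y) := by
        refine Finset.sum_congr rfl fun σ _ => ?_
        rw [Fdet_perm]
        ring
    _ = (bmat x y τ).det * ((∏ i : Fin n, x (τ i) ^ (i : ℕ)) * vdp y) := by
        rw [← Finset.sum_mul, hsum]
    _ = _ := by rw [hdet]; ring

lemma sym_identity {n : ℕ} (x : Fin n → ℝ) (y : Fin (n+1) → ℝ)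
    (hxy : ∀ j k, x j + y k ≠ 0) :
    ∑ τ : Equiv.Perm (Fin n), ∑ σ : Equiv.Perm (Fin (n+1)), Fdet (x ∘ τ) (y ∘ σ)
      = vdp x ^ 2 * vdp y ^ 2 / ∏ j : Fin n, ∏ k : Fin (n+1), (x j + y k) := by
  have hvdm : ∑ τ : Equiv.Perm (Fin n),
      ((Equiv.Perm.sign τ : ℤ) : ℝ) * ∏ i : Fin n, x (τ i) ^ (i : ℕ) = vdp x := by
    rw [vdp_eq_det_vandermonde, Matrix.det_apply']
    exact Finset.sum_congr rfl fun τ _ => rfl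
  calc ∑ τ : Equiv.Perm (Fin n), ∑ σ : Equiv.Perm (Fin (n+1)), Fdet (x ∘ τ) (y ∘ σ)
      = ∑ τ : Equiv.Perm (Fin n),
          (((Equiv.Perm.sign τ : ℤ) : ℝ) * ∏ i : Fin n, x (τ i) ^ (i : ℕ)) *
          (vdp x * vdp y ^ 2 / ∏ j : Fin n, ∏ k : Fin (n+1), (x j + y k)) :=
        Finset.sum_congr rfl fun τ _ => Fdet_sum_sigma x y hxy τ
    _ = vdp x * (vdp x * vdp y ^ 2 / ∏ j : Fin n, ∏ k : Fin (n+1), (x j + y k)) := by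
        rw [← Finset.sum_mul, hvdm]
    _ = _ := by ring

open Finset Matrix MeasureTheory MeasureTheory.Measure

section PiProd

variable {α : Type*} [MeasurableSpace α] {μ : Measure α} [SigmaFinite μ]

theorem my_integrable_pi_prod : ∀ {n : ℕ} {f : Fin n → α → ℝ}, (∀ i, Integrable (f i) μ) →
    Integrable (fun x : Fin n → α => ∏ i, f i (x i)) (Measure.pi fun _ => μ) := by
  intro n
  induction n with
  | zero =>
    intro f _
    simp only [Finset.univ_eq_empty, Finset.prod_empty]
    rw [integrable_const_iff]
    right
    refine ⟨?_⟩
    rw [Measure.pi_empty_univ]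
    exact ENNReal.one_lt_top
  | succ n ih =>
    intro f hf
    have h := (measurePreserving_piFinSuccAbove (fun _ : Fin (n+1) => μ) 0).symm
    rw [← h.integrable_comp_emb (MeasurableEquiv.measurableEmbedding _)]
    have hcomp : ((fun x : Fin (n+1) → α => ∏ i, f i (x i)) ∘
        ⇑(MeasurableEquiv.piFinSuccAbove (fun _ : Fin (n+1) => α) 0).symm)
        = fun p : α × (Fin n → α) => f 0 p.1 * ∏ i : Fin n, f i.succ (p.2 i) := by
      ext p
      simp only [Function.comp_apply, MeasurableEquiv.piFinSuccAbove_symm_apply,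
        Fin.insertNthEquiv, Equiv.coe_fn_mk, Fin.prod_univ_succ, Fin.insertNth_zero,
        Fin.cons_zero, Fin.cons_succ]
      rfl
    rw [hcomp]
    exact Integrable.mul_prod (hf 0) (ih fun i => hf i.succ)

theorem my_integral_pi_prod : ∀ {n : ℕ} (f : Fin n → α → ℝ),
    ∫ x : Fin n → α, (∏ i, f i (x i)) ∂(Measure.pi fun _ => μ) = ∏ i, ∫ a, f i a ∂μ := by
  intro n
  induction n with
  | zero =>
    intro f
    simp only [Finset.univ_eq_empty, Finset.prod_empty]
    rw [integral_const, measureReal_def, Measure.pi_empty_univ]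
    simp
  | succ n ih =>
    intro f
    have h := (measurePreserving_piFinSuccAbove (fun _ : Fin (n+1) => μ) 0).symm
    rw [← h.integral_comp']
    have hcomp : ∀ p : α × (Fin n → α),
        (∏ i, f i (((MeasurableEquiv.piFinSuccAbove (fun _ : Fin (n+1) => α) 0).symm p) i))
        = f 0 p.1 * ∏ i : Fin n, f i.succ (p.2 i) := by
      intro p
      simp only [MeasurableEquiv.piFinSuccAbove_symm_apply,
        Fin.insertNthEquiv, Equiv.coe_fn_mk, Fin.prod_univ_succ, Fin.insertNth_zero,
        Fin.cons_zero, Fin.cons_succ]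
      rfl
    rw [integral_congr_ae (Filter.Eventually.of_forall hcomp)]
    have hpm := integral_prod_mul (μ := μ) (ν := (Measure.pi fun _ : Fin n => μ)) (f 0)
      (fun w : Fin n → α => ∏ i : Fin n, f i.succ (w i))
    rw [hpm, ih fun i => f i.succ, Fin.prod_univ_succ]

end PiProd

section Key

variable {μ1 μ2 : Measure ℝ} [IsFiniteMeasure μ1] [IsFiniteMeasure μ2]

theorem key_lemma {n : ℕ} (f : Fin n → ℝ × ℝ → ℝ) (hf : ∀ i, Integrable (f i) (μ1.prod μ2))
    (g : ℝ → ℝ) (hg : Integrable g μ2) :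
    Integrable (fun p : (Fin n → ℝ) × (Fin (n+1) → ℝ) =>
        (∏ i : Fin n, f i (p.1 i, p.2 i.castSucc)) * g (p.2 (Fin.last n)))
      ((Measure.pi fun _ : Fin n => μ1).prod (Measure.pi fun _ : Fin (n+1) => μ2)) ∧
    (∫ p : (Fin n → ℝ) × (Fin (n+1) → ℝ),
        (∏ i : Fin n, f i (p.1 i, p.2 i.castSucc)) * g (p.2 (Fin.last n))
        ∂((Measure.pi fun _ : Fin n => μ1).prod (Measure.pi fun _ : Fin (n+1) => μ2)))
      = (∏ i : Fin n, ∫ z, f i z ∂(μ1.prod μ2)) * ∫ t, g t ∂μ2 := by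
  set H : (Fin n → ℝ) × (Fin (n+1) → ℝ) → ℝ := fun p =>
    (∏ i : Fin n, f i (p.1 i, p.2 i.castSucc)) * g (p.2 (Fin.last n)) with hH
  set E : ((Fin n → ℝ × ℝ) × ℝ) ≃ᵐ ((Fin n → ℝ) × (Fin (n+1) → ℝ)) :=
    ((MeasurableEquiv.arrowProdEquivProdArrow ℝ ℝ (Fin n)).prodCongr
      (MeasurableEquiv.refl ℝ)).trans
    ((MeasurableEquiv.prodAssoc).trans
    (((MeasurableEquiv.refl (Fin n → ℝ)).prodCongr
        (MeasurableEquiv.prodComm : (Fin n → ℝ) × ℝ ≃ᵐ ℝ × (Fin n → ℝ))).trans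
      ((MeasurableEquiv.refl (Fin n → ℝ)).prodCongr
        (MeasurableEquiv.piFinSuccAbove (fun _ : Fin (n+1) => ℝ) (Fin.last n)).symm))) with hE
  have hMP : MeasurePreserving (⇑E)
      ((Measure.pi fun _ : Fin n => μ1.prod μ2).prod μ2)
      ((Measure.pi fun _ : Fin n => μ1).prod (Measure.pi fun _ : Fin (n+1) => μ2)) := by
    have h1 := (measurePreserving_arrowProdEquivProdArrow ℝ ℝ (Fin n)
      (fun _ => μ1) (fun _ => μ2)).prod (MeasurePreserving.id μ2)
    have h2 := measurePreserving_prodAssoc (Measure.pi fun _ : Fin n => μ1)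
      (Measure.pi fun _ : Fin n => μ2) μ2
    have h3 := (MeasurePreserving.id (Measure.pi fun _ : Fin n => μ1)).prod
      (measurePreserving_swap (μ := Measure.pi fun _ : Fin n => μ2) (ν := μ2))
    have h4 := (MeasurePreserving.id (Measure.pi fun _ : Fin n => μ1)).prod
      ((measurePreserving_piFinSuccAbove (fun _ : Fin (n+1) => μ2) (Fin.last n)).symm)
    exact (h4.comp (h3.comp (h2.comp h1)))
  have hHE : ∀ q : (Fin n → ℝ × ℝ) × ℝ,
      H (E q) = (∏ i : Fin n, f i (q.1 i)) * g q.2 := by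
    intro q
    have hEq : E q = (fun i => (q.1 i).1,
        (Fin.last n).insertNth q.2 (fun i => (q.1 i).2)) := rfl
    rw [hEq, hH]
    simp only
    rw [Fin.insertNth_apply_same]
    congr 1
    refine Finset.prod_congr rfl fun i _ => ?_
    have : (Fin.castSucc i) = (Fin.last n).succAbove i := by rw [Fin.succAbove_last]
    rw [this, Fin.insertNth_apply_succAbove]
  constructor
  · rw [← hMP.integrable_comp_emb E.measurableEmbedding]
    have : (H ∘ ⇑E) = fun q : (Fin n → ℝ × ℝ) × ℝ =>
        (∏ i : Fin n, f i (q.1 i)) * g q.2 := funext fun q => hHE q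
    rw [this]
    exact Integrable.mul_prod (my_integrable_pi_prod hf) hg
  · rw [← hMP.integral_comp' H]
    rw [integral_congr_ae (Filter.Eventually.of_forall hHE)]
    have hpm := integral_prod_mul (μ := (Measure.pi fun _ : Fin n => μ1.prod μ2)) (ν := μ2)
      (fun w : Fin n → ℝ × ℝ => ∏ i : Fin n, f i (w i)) g
    rw [hpm, my_integral_pi_prod (fun i => f i)]

end Key

theorem perm_pi_equiv {α : Type*} [MeasurableSpace α] (μ : Measure α) [SigmaFinite μ]
    {ι : Type*} [Fintype ι] [DecidableEq ι] (τ : Equiv.Perm ι) :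
    ∃ e : (ι → α) ≃ᵐ (ι → α), (⇑e = fun x j => x (τ j)) ∧
      MeasurePreserving e (Measure.pi fun _ => μ) (Measure.pi fun _ => μ) := by
  refine ⟨MeasurableEquiv.piCongrLeft (fun _ => α) (τ.symm : ι ≃ ι), ?_, ?_⟩
  · funext x
    funext j
    rw [MeasurableEquiv.coe_piCongrLeft]
    simpa using Equiv.piCongrLeft_apply_apply (fun _ : ι => α) (τ.symm : ι ≃ ι) x (τ j)
  · exact measurePreserving_piCongrLeft (fun _ => μ) (τ.symm : ι ≃ ι)

theorem ae_pos_coords {μ1 μ2 : Measure ℝ} [IsFiniteMeasure μ1] [IsFiniteMeasure μ2]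
    (hμ1 : μ1 (Set.Iic 0) = 0) (hμ2 : μ2 (Set.Iic 0) = 0) {n m : ℕ} :
    ∀ᵐ p : (Fin n → ℝ) × (Fin m → ℝ)
      ∂((Measure.pi fun _ : Fin n => μ1).prod (Measure.pi fun _ : Fin m => μ2)),
      (∀ j, 0 < p.1 j) ∧ (∀ k, 0 < p.2 k) := by
  have h1 : ∀ᵐ p : (Fin n → ℝ) × (Fin m → ℝ)
      ∂((Measure.pi fun _ : Fin n => μ1).prod (Measure.pi fun _ : Fin m => μ2)),
      (∀ j, 0 < p.1 j) := by
    rw [ae_all_iff]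
    intro j
    rw [ae_iff]
    have hset : {p : (Fin n → ℝ) × (Fin m → ℝ) | ¬ 0 < p.1 j}
        = (Function.eval j ⁻¹' Set.Iic 0) ×ˢ Set.univ := by
      ext p; simp [not_lt, Set.mem_prod, Function.eval]
    rw [hset, Measure.prod_prod, Measure.pi_eval_preimage_null _ hμ1, zero_mul]
  have h2 : ∀ᵐ p : (Fin n → ℝ) × (Fin m → ℝ)
      ∂((Measure.pi fun _ : Fin n => μ1).prod (Measure.pi fun _ : Fin m => μ2)),
      (∀ k, 0 < p.2 k) := by
    rw [ae_all_iff]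
    intro k
    rw [ae_iff]
    have hset : {p : (Fin n → ℝ) × (Fin m → ℝ) | ¬ 0 < p.2 k}
        = Set.univ ×ˢ (Function.eval k ⁻¹' Set.Iic 0) := by
      ext p; simp [not_lt, Set.mem_prod, Function.eval]
    rw [hset, Measure.prod_prod, Measure.pi_eval_preimage_null _ hμ2, mul_zero]
  exact h1.and h2

lemma Fdet_expand {n : ℕ} (x : Fin n → ℝ) (y : Fin (n+1) → ℝ) :
    Fdet x y = ∑ ρ : Equiv.Perm (Fin (n+1)), ((Equiv.Perm.sign ρ : ℤ) : ℝ) *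
      ((∏ i : Fin n, x i ^ (i : ℕ) * y i.castSucc ^ ((ρ i.castSucc : Fin (n+1)) : ℕ)
          / (x i + y i.castSucc)) * y (Fin.last n) ^ ((ρ (Fin.last n) : Fin (n+1)) : ℕ)) := by
  rw [Fdet, ← Matrix.det_transpose, Matrix.det_apply']
  refine Finset.sum_congr rfl fun ρ _ => ?_
  congr 1
  simp only [Matrix.transpose_apply, Matrix.of_apply]
  rw [Fin.prod_univ_castSucc]
  have hlast : ¬ ((Fin.last n : Fin (n+1)) : ℕ) < n := by simp
  rw [dif_neg hlast]
  congr 1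
  refine Finset.prod_congr rfl fun i _ => ?_
  have h : ((Fin.castSucc i : Fin (n+1)) : ℕ) < n := i.isLt
  rw [dif_pos h]
  have hmk : (⟨(i.castSucc : ℕ), h⟩ : Fin n) = i := by ext; simp
  rw [hmk, Fin.coe_castSucc]

lemma det_target {n : ℕ} (m : ℕ → ℕ → ℝ) (φ : ℕ → ℝ) :
    (Matrix.of fun i j : Fin (n+1) => if (i : ℕ) < n then m i j else φ j).det
      = ∑ ρ : Equiv.Perm (Fin (n+1)), ((Equiv.Perm.sign ρ : ℤ) : ℝ) *
        ((∏ i : Fin n, m (i : ℕ) ((ρ i.castSucc : Fin (n+1)) : ℕ))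
          * φ ((ρ (Fin.last n) : Fin (n+1)) : ℕ)) := by
  rw [← Matrix.det_transpose, Matrix.det_apply']
  refine Finset.sum_congr rfl fun ρ _ => ?_
  congr 1
  simp only [Matrix.transpose_apply, Matrix.of_apply]
  rw [Fin.prod_univ_castSucc]
  have hlast : ¬ ((Fin.last n : Fin (n+1)) : ℕ) < n := by simp
  rw [if_neg hlast]
  congr 1
  refine Finset.prod_congr rfl fun i _ => ?_
  have h : ((Fin.castSucc i : Fin (n+1)) : ℕ) < n := i.isLt
  rw [if_pos h, Fin.coe_castSucc]

/-- Integral representation of the bordered Gram determinant `σ_n`: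
`σ_n = 1/(n!(n+1)!) ∫ Δ²(x)Δ²(y) / ∏(x_j+y_k) dμ₁ⁿ dμ₂ⁿ⁺¹`. -/
theorem stmt14 (μ1 μ2 : Measure ℝ) [IsFiniteMeasure μ1] [IsFiniteMeasure μ2]
    (hμ1 : μ1 (Set.Iic 0) = 0) (hμ2 : μ2 (Set.Iic 0) = 0)
    (hmom : ∀ i j : ℕ,
      Integrable (fun p : ℝ × ℝ => p.1 ^ i * p.2 ^ j / (p.1 + p.2)) (μ1.prod μ2))
    (hmom2 : ∀ j : ℕ, Integrable (fun y : ℝ => y ^ j) μ2)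
    (m : ℕ → ℕ → ℝ)
    (hm : ∀ i j, m i j = ∫ p : ℝ × ℝ, p.1 ^ i * p.2 ^ j / (p.1 + p.2) ∂(μ1.prod μ2))
    (φ : ℕ → ℝ) (hφ : ∀ j, φ j = ∫ y : ℝ, y ^ j ∂μ2)
    (n : ℕ) :
    (Matrix.of fun i j : Fin (n+1) => if (i:ℕ) < n then m i j else φ j).det =
      (1 / ((Nat.factorial n : ℝ) * (Nat.factorial (n+1) : ℝ))) *
        ∫ p : (Fin n → ℝ) × (Fin (n+1) → ℝ),
          ((∏ j : Fin n, ∏ k ∈ Finset.Ioi j, (p.1 k - p.1 j))^2 *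
            (∏ j : Fin (n+1), ∏ k ∈ Finset.Ioi j, (p.2 k - p.2 j))^2) /
          (∏ j : Fin n, ∏ k : Fin (n+1), (p.1 j + p.2 k))
          ∂((Measure.pi fun _ : Fin n => μ1).prod (Measure.pi fun _ : Fin (n+1) => μ2)) := by
  classical
  set ν := (Measure.pi fun _ : Fin n => μ1).prod (Measure.pi fun _ : Fin (n+1) => μ2) with hν
  set F : (Fin n → ℝ) × (Fin (n+1) → ℝ) → ℝ := fun p => Fdet p.1 p.2 with hF
  -- per-permutation term data
  have hterm : ∀ ρ : Equiv.Perm (Fin (n+1)),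
      Integrable (fun p : (Fin n → ℝ) × (Fin (n+1) → ℝ) =>
        (∏ i : Fin n, p.1 i ^ (i : ℕ) * p.2 i.castSucc ^ ((ρ i.castSucc : Fin (n+1)) : ℕ)
          / (p.1 i + p.2 i.castSucc)) * p.2 (Fin.last n) ^ ((ρ (Fin.last n) : Fin (n+1)) : ℕ)) ν ∧
      (∫ p : (Fin n → ℝ) × (Fin (n+1) → ℝ),
        ((∏ i : Fin n, p.1 i ^ (i : ℕ) * p.2 i.castSucc ^ ((ρ i.castSucc : Fin (n+1)) : ℕ)
          / (p.1 i + p.2 i.castSucc)) * p.2 (Fin.last n) ^ ((ρ (Fin.last n) : Fin (n+1)) : ℕ)) ∂ν)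
        = (∏ i : Fin n, m (i : ℕ) ((ρ i.castSucc : Fin (n+1)) : ℕ))
            * φ ((ρ (Fin.last n) : Fin (n+1)) : ℕ) := by
    intro ρ
    have hk := key_lemma (μ1 := μ1) (μ2 := μ2)
      (fun i : Fin n => fun z : ℝ × ℝ =>
        z.1 ^ (i : ℕ) * z.2 ^ ((ρ i.castSucc : Fin (n+1)) : ℕ) / (z.1 + z.2))
      (fun i => hmom (i : ℕ) ((ρ i.castSucc : Fin (n+1)) : ℕ))
      (fun t : ℝ => t ^ ((ρ (Fin.last n) : Fin (n+1)) : ℕ))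
      (hmom2 ((ρ (Fin.last n) : Fin (n+1)) : ℕ))
    constructor
    · exact hk.1
    · have h2 := hk.2
      have h3 : (∏ i : Fin n, ∫ z : ℝ × ℝ,
          z.1 ^ (i : ℕ) * z.2 ^ ((ρ i.castSucc : Fin (n+1)) : ℕ) / (z.1 + z.2) ∂(μ1.prod μ2))
            * (∫ t : ℝ, t ^ ((ρ (Fin.last n) : Fin (n+1)) : ℕ) ∂μ2)
          = (∏ i : Fin n, m (i : ℕ) ((ρ i.castSucc : Fin (n+1)) : ℕ))
            * φ ((ρ (Fin.last n) : Fin (n+1)) : ℕ) := by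
        rw [hφ]
        congr 1
        exact Finset.prod_congr rfl fun i _ => (hm _ _).symm
      exact h2.trans h3
  -- expansion of F
  have hFeq : F = fun p => ∑ ρ : Equiv.Perm (Fin (n+1)), ((Equiv.Perm.sign ρ : ℤ) : ℝ) *
      ((∏ i : Fin n, p.1 i ^ (i : ℕ) * p.2 i.castSucc ^ ((ρ i.castSucc : Fin (n+1)) : ℕ)
        / (p.1 i + p.2 i.castSucc)) * p.2 (Fin.last n) ^ ((ρ (Fin.last n) : Fin (n+1)) : ℕ)) :=
    funext fun p => Fdet_expand p.1 p.2
  have hFint : Integrable F ν := by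
    rw [hFeq]
    exact integrable_finset_sum _ fun ρ _ => ((hterm ρ).1).const_mul _
  have hFval : ∫ p, F p ∂ν
      = (Matrix.of fun i j : Fin (n+1) => if (i:ℕ) < n then m i j else φ j).det := by
    rw [hFeq, integral_finset_sum _ fun ρ _ => ((hterm ρ).1).const_mul _, det_target]
    refine Finset.sum_congr rfl fun ρ _ => ?_
    rw [integral_const_mul, (hterm ρ).2]
  -- permutation invariance
  have hperm : ∀ (τ : Equiv.Perm (Fin n)) (σ : Equiv.Perm (Fin (n+1))),
      Integrable (fun p : (Fin n → ℝ) × (Fin (n+1) → ℝ) => Fdet (p.1 ∘ τ) (p.2 ∘ σ)) ν ∧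
      (∫ p, Fdet (p.1 ∘ τ) (p.2 ∘ σ) ∂ν) = ∫ p, F p ∂ν := by
    intro τ σ
    obtain ⟨e1, he1c, he1⟩ := perm_pi_equiv μ1 τ
    obtain ⟨e2, he2c, he2⟩ := perm_pi_equiv μ2 σ
    set Pm : ((Fin n → ℝ) × (Fin (n+1) → ℝ)) ≃ᵐ ((Fin n → ℝ) × (Fin (n+1) → ℝ)) :=
      e1.prodCongr e2 with hPm
    have hPmc : ∀ p : (Fin n → ℝ) × (Fin (n+1) → ℝ),
        Pm p = (fun j => p.1 (τ j), fun k => p.2 (σ k)) := by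
      intro p
      show (e1 p.1, e2 p.2) = _
      rw [he1c, he2c]
    have hPmp : MeasurePreserving (⇑Pm) ν ν := he1.prod he2
    have hcomp : (fun p : (Fin n → ℝ) × (Fin (n+1) → ℝ) => Fdet (p.1 ∘ τ) (p.2 ∘ σ))
        = F ∘ ⇑Pm := by
      funext p
      show _ = F (Pm p)
      rw [hPmc p]
      rfl
    constructor
    · rw [hcomp]
      exact (hPmp.integrable_comp_emb Pm.measurableEmbedding).2 hFint
    · rw [hcomp]
      exact hPmp.integral_comp' F
  -- the big integrand
  have hG : (fun p : (Fin n → ℝ) × (Fin (n+1) → ℝ) =>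
      ((∏ j : Fin n, ∏ k ∈ Finset.Ioi j, (p.1 k - p.1 j))^2 *
        (∏ j : Fin (n+1), ∏ k ∈ Finset.Ioi j, (p.2 k - p.2 j))^2) /
      (∏ j : Fin n, ∏ k : Fin (n+1), (p.1 j + p.2 k)))
      =ᵐ[ν] fun p => ∑ τ : Equiv.Perm (Fin n), ∑ σ : Equiv.Perm (Fin (n+1)),
        Fdet (p.1 ∘ τ) (p.2 ∘ σ) := by
    filter_upwards [ae_pos_coords hμ1 hμ2] with p hp
    exact (sym_identity p.1 p.2 fun j k => ne_of_gt (add_pos (hp.1 j) (hp.2 k))).symm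
  have hGval : (∫ p : (Fin n → ℝ) × (Fin (n+1) → ℝ),
      ((∏ j : Fin n, ∏ k ∈ Finset.Ioi j, (p.1 k - p.1 j))^2 *
        (∏ j : Fin (n+1), ∏ k ∈ Finset.Ioi j, (p.2 k - p.2 j))^2) /
      (∏ j : Fin n, ∏ k : Fin (n+1), (p.1 j + p.2 k)) ∂ν)
      = ((Nat.factorial n : ℝ) * (Nat.factorial (n+1) : ℝ)) * ∫ p, F p ∂ν := by
    rw [integral_congr_ae hG,
      integral_finset_sum _ fun τ _ => integrable_finset_sum _ fun σ _ => (hperm τ σ).1]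
    have : ∀ τ : Equiv.Perm (Fin n),
        (∫ p, ∑ σ : Equiv.Perm (Fin (n+1)), Fdet (p.1 ∘ τ) (p.2 ∘ σ) ∂ν)
          = (Nat.factorial (n+1) : ℝ) * ∫ p, F p ∂ν := by
      intro τ
      rw [integral_finset_sum _ fun σ _ => (hperm τ σ).1]
      rw [Finset.sum_congr rfl fun σ _ => (hperm τ σ).2, Finset.sum_const, Finset.card_univ,
        Fintype.card_perm, Fintype.card_fin, nsmul_eq_mul]
    rw [Finset.sum_congr rfl fun τ _ => this τ, Finset.sum_const, Finset.card_univ,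
      Fintype.card_perm, Fintype.card_fin, nsmul_eq_mul]
    ring
  rw [hGval, ← hFval]
  have hne : ((Nat.factorial n : ℝ) * (Nat.factorial (n+1) : ℝ)) ≠ 0 :=
    mul_ne_zero (Nat.cast_ne_zero.2 (Nat.factorial_ne_zero n))
      (Nat.cast_ne_zero.2 (Nat.factorial_ne_zero (n+1)))
  field_simp
end
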